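/- arXiv:1003.5944 — 7 statements merged into one kernel-verified Lean document; each statement's English description precedes it below -/
import Mathlib

section
/- For every n ≥ 3 there exists an n-skeletal simplicial set that is not (2n−2)-coskeletal; that is, an n-skeletal simplicial set containing a (2n−1)-sphere that has no filler. -/
open CategoryTheory Simplicial

namespace AufhebungSSet

/-- An `n`-simplex `x` of a simplicial set `X` is degenerate if it is the image of a
simplex of strictly smaller dimension under the action of an epimorphism of `Δ`. -/
def IsDegen (X : SSet) {n : ℕ} (x : X _⦋n⦌) : Prop :=
  ∃ m : ℕ, m < n ∧ ∃ ε : (⦋n⦌ : SimplexCategory) ⟶ ⦋m⦌,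
    Function.Surjective ε.toOrderHom ∧ ∃ y : X _⦋m⦌, x = X.map ε.op y

/-- The degeneracy `dgn x = n - k`, where `k` is the least dimension from which `x`
is the image of a simplex under the action of an epimorphism; by the Eilenberg–Zilber
lemma this is the dimension of the nondegenerate simplex of which `x` is a degeneracy. -/
noncomputable def dgn (X : SSet) {n : ℕ} (x : X _⦋n⦌) : ℕ :=
  n - sInf (setOf fun k : ℕ => ∃ ε : (⦋n⦌ : SimplexCategory) ⟶ ⦋k⦌,
    Function.Surjective ε.toOrderHom ∧ ∃ y : X _⦋k⦌, x = X.map ε.op y)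

/-- `i` reduces `x` when `dgn (x δᵢ) = dgn x - 1`. -/
def Reduces (X : SSet) {n : ℕ} (i : Fin (n + 2)) (x : X _⦋n + 1⦌) : Prop :=
  dgn X (X.map (SimplexCategory.δ i).op x) + 1 = dgn X x

/-- `i` properly reduces `x` when `x = x δᵢ σᵢ`. -/
def ProperlyReduces (X : SSet) {n : ℕ} (i : Fin (n + 1)) (x : X _⦋n + 1⦌) : Prop :=
  x = X.map (SimplexCategory.σ i).op (X.map (SimplexCategory.δ i.castSucc).op x)

/-- A `(K+2)`-sphere: a family `c₀, …, c_{K+2}` of `(K+1)`-simplices satisfying the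
cycle equations `cⱼ δᵢ = cᵢ δ_{j-1}` for `i < j` (here reindexed: `c_{j+1} δᵢ = cᵢ δⱼ`
for `i ≤ j`). -/
def IsSphere (X : SSet) {K : ℕ} (c : Fin (K + 3) → X _⦋K + 1⦌) : Prop :=
  ∀ i j : Fin (K + 2), i ≤ j →
    X.map (SimplexCategory.δ i).op (c j.succ) = X.map (SimplexCategory.δ j).op (c i.castSucc)

/-- `y` fills the sphere `c` when `y δᵢ = cᵢ` for all `i`. -/
def IsFiller (X : SSet) {K : ℕ} (y : X _⦋K + 2⦌) (c : Fin (K + 3) → X _⦋K + 1⦌) : Prop :=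
  ∀ i : Fin (K + 3), X.map (SimplexCategory.δ i).op y = c i

universe u

open SimplexCategory in
/-- The quotient `Δ[n]/∂Δ[n]`: simplices are surjections to `[n]`, plus a point. -/
def Q (n : ℕ) : SSet.{u} where
  obj k := Option (ULift.{u} {f : k.unop ⟶ ⦋n⦌ // Function.Surjective f.toOrderHom})
  map {k l} τ := TypeCat.ofHom fun x => x.bind fun f =>
    if h : Function.Surjective (τ.unop ≫ f.down.1).toOrderHom
      then some ⟨⟨τ.unop ≫ f.down.1, h⟩⟩ else none
  map_id k := by
    refine ConcreteCategory.hom_ext _ _ fun x => ?_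
    obtain _ | ⟨⟨f, hf⟩⟩ := x
    · rfl
    · show (if h : _ then _ else _) = _
      rw [dif_pos (by simpa using hf)]
      simp
  map_comp {k l j} τ σ := by
    refine ConcreteCategory.hom_ext _ _ fun x => ?_
    obtain _ | ⟨⟨f, hf⟩⟩ := x
    · rfl
    · show (if h : _ then _ else _)
        = Option.bind (if h : _ then some (⟨⟨τ.unop ≫ f, h⟩⟩ :
            ULift.{u} {f : l.unop ⟶ ⦋n⦌ // Function.Surjective f.toOrderHom}) else none) _
      by_cases h1 : Function.Surjective (τ.unop ≫ f).toOrderHom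
      · rw [dif_pos h1]
        show _ = (if h : _ then _ else _)
        by_cases h2 : Function.Surjective (σ.unop ≫ τ.unop ≫ f).toOrderHom
        · rw [dif_pos h2, dif_pos (by rw [unop_comp, Category.assoc]; exact h2)]
          simp
        · rw [dif_neg h2, dif_neg (by rw [unop_comp, Category.assoc]; exact h2)]
      · rw [dif_neg h1, dif_neg (by
          rw [unop_comp, Category.assoc]
          intro h
          apply h1
          have h' : Function.Surjective
              ((τ.unop ≫ f).toOrderHom ∘ σ.unop.toOrderHom) := h
          exact h'.of_comp)]
        rfl

lemma Q_map_some {n : ℕ} {k l : SimplexCategory} (τ : k ⟶ l) (f : l ⟶ ⦋n⦌)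
    (hf : Function.Surjective f.toOrderHom) :
    (Q.{u} n).map τ.op (some ⟨⟨f, hf⟩⟩) =
      if h : Function.Surjective (τ ≫ f).toOrderHom then some ⟨⟨τ ≫ f, h⟩⟩ else none := rfl

lemma Q_map_none {n : ℕ} {k l : SimplexCategory} (τ : k ⟶ l) :
    (Q.{u} n).map τ.op none = none := rfl

lemma Q_map_eq_of_comp_eq {n : ℕ} {k l : SimplexCategory} (τ τ' : k ⟶ l) (f f' : l ⟶ ⦋n⦌)
    (hf : Function.Surjective f.toOrderHom) (hf' : Function.Surjective f'.toOrderHom)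
    (h : τ ≫ f = τ' ≫ f') :
    (Q.{u} n).map τ.op (some ⟨⟨f, hf⟩⟩) = (Q.{u} n).map τ'.op (some ⟨⟨f', hf'⟩⟩) := by
  rw [Q_map_some, Q_map_some]
  simp only [h]
  rfl

lemma Q_map_eq_none {n : ℕ} {k l : SimplexCategory} (τ : k ⟶ l) (f : l ⟶ ⦋n⦌)
    (hf : Function.Surjective f.toOrderHom)
    (h : ¬ Function.Surjective (τ ≫ f).toOrderHom) :
    (Q.{u} n).map τ.op (some ⟨⟨f, hf⟩⟩) = none := by
  rw [Q_map_some, dif_neg h]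

lemma succAbove_val {N : ℕ} (t : Fin (N + 2)) (k : Fin (N + 1)) :
    ((t.succAbove k) : ℕ) = if (k : ℕ) < (t : ℕ) then (k : ℕ) else (k : ℕ) + 1 := by
  rcases lt_or_ge (k : ℕ) (t : ℕ) with h | h
  · rw [Fin.succAbove_of_castSucc_lt _ _ (by simp [Fin.lt_def, h])]
    simp [h]
  · rw [Fin.succAbove_of_le_castSucc _ _ (by simp [Fin.le_def, h])]
    simp [Nat.not_lt.2 h]

section Sphere

variable (m : ℕ)

/-- the surjection `[2m+4] → [m+3]`, `k ↦ k - (m+1)` (truncated). -/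
def aS : (⦋2 * m + 4⦌ : SimplexCategory) ⟶ ⦋m + 3⦌ :=
  SimplexCategory.mkHom
    ⟨fun k => ⟨(k : ℕ) - (m + 1), by have := k.isLt; omega⟩,
     fun x y h => by
      simp only [Fin.mk_le_mk]
      exact Nat.sub_le_sub_right h _⟩

/-- the surjection `[2m+4] → [m+3]`, `k ↦ min k (m+3)`. -/
def bS : (⦋2 * m + 4⦌ : SimplexCategory) ⟶ ⦋m + 3⦌ :=
  SimplexCategory.mkHom
    ⟨fun k => ⟨min (k : ℕ) (m + 3), by omega⟩,
     fun x y h => by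
      simp only [Fin.mk_le_mk]
      have : (x : ℕ) ≤ (y : ℕ) := h
      omega⟩

lemma haS : Function.Surjective (aS m).toOrderHom := by
  intro v
  have hv := v.isLt
  simp only [SimplexCategory.len_mk] at hv
  refine ⟨⟨(v : ℕ) + (m + 1), by simp only [SimplexCategory.len_mk]; omega⟩, ?_⟩
  apply Fin.ext
  show (v : ℕ) + (m + 1) - (m + 1) = (v : ℕ)
  omega

lemma hbS : Function.Surjective (bS m).toOrderHom := by
  intro v
  have hv := v.isLt
  simp only [SimplexCategory.len_mk] at hv
  refine ⟨⟨(v : ℕ), by simp only [SimplexCategory.len_mk]; omega⟩, ?_⟩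
  apply Fin.ext
  show min (v : ℕ) (m + 3) = (v : ℕ)
  omega

lemma aS_comp_val (t : Fin (2 * m + 5)) (k : Fin (2 * m + 4)) :
    (((SimplexCategory.δ t ≫ aS m).toOrderHom k) : ℕ) = ((t.succAbove k : ℕ)) - (m + 1) := rfl

lemma bS_comp_val (t : Fin (2 * m + 5)) (k : Fin (2 * m + 4)) :
    (((SimplexCategory.δ t ≫ bS m).toOrderHom k) : ℕ) = min ((t.succAbove k : ℕ)) (m + 3) := rfl

lemma comp_delta_apply {q : ℕ} (t : Fin (2 * m + 6)) (g : (⦋2 * m + 5⦌ : SimplexCategory) ⟶ ⦋q⦌)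
    (k : Fin (2 * m + 5)) :
    (SimplexCategory.δ t ≫ g).toOrderHom k = g.toOrderHom (t.succAbove k) := rfl

/-- the `(2n-1)`-sphere with no filler -/
def csph (i : Fin (2 * m + 6)) : (Q.{u} (m + 3)) _⦋2 * m + 4⦌ :=
  if (i : ℕ) < m + 3 then some ⟨⟨aS m, haS m⟩⟩ else some ⟨⟨bS m, hbS m⟩⟩

lemma delta_aS_eq (s t : Fin (2 * m + 5)) (hs : (s : ℕ) ≤ m + 1) (ht : (t : ℕ) ≤ m + 1) :
    SimplexCategory.δ s ≫ aS m = SimplexCategory.δ t ≫ aS m := by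
  apply SimplexCategory.Hom.ext
  apply OrderHom.ext
  funext k
  apply Fin.ext
  rw [aS_comp_val, aS_comp_val, succAbove_val, succAbove_val]
  have := k.isLt
  split_ifs <;> omega

lemma delta_bS_eq (s t : Fin (2 * m + 5)) (hs : m + 3 ≤ (s : ℕ)) (ht : m + 3 ≤ (t : ℕ)) :
    SimplexCategory.δ s ≫ bS m = SimplexCategory.δ t ≫ bS m := by
  apply SimplexCategory.Hom.ext
  apply OrderHom.ext
  funext k
  apply Fin.ext
  rw [bS_comp_val, bS_comp_val, succAbove_val, succAbove_val]
  have := k.isLt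
  split_ifs <;> omega

lemma delta_aS_not_surj (t : Fin (2 * m + 5)) (ht : m + 2 ≤ (t : ℕ)) :
    ¬ Function.Surjective (SimplexCategory.δ t ≫ aS m).toOrderHom := by
  intro h
  have hlt := t.isLt
  obtain ⟨k, hk⟩ := h ⟨(t : ℕ) - (m + 1), by simp only [SimplexCategory.len_mk]; omega⟩
  have hv := congrArg Fin.val hk
  rw [aS_comp_val, succAbove_val] at hv
  simp only at hv
  have := k.isLt
  split_ifs at hv <;> omega

lemma delta_bS_not_surj (t : Fin (2 * m + 5)) (ht : (t : ℕ) ≤ m + 2) :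
    ¬ Function.Surjective (SimplexCategory.δ t ≫ bS m).toOrderHom := by
  intro h
  obtain ⟨k, hk⟩ := h ⟨(t : ℕ), by simp only [SimplexCategory.len_mk]; omega⟩
  have hv := congrArg Fin.val hk
  rw [bS_comp_val, succAbove_val] at hv
  simp only at hv
  have := k.isLt
  split_ifs at hv <;> omega

lemma csph_isSphere : IsSphere (Q.{u} (m + 3)) (K := 2 * m + 3) (csph m) := by
  intro i j hij
  have hij' : (i : ℕ) ≤ (j : ℕ) := hij
  have hi := i.isLt
  have hj := j.isLt
  rcases le_or_gt ((j : ℕ) + 1) (m + 2) with h1 | h1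
  · -- both a
    rw [show csph m j.succ = some ⟨⟨aS m, haS m⟩⟩ from if_pos (by simp only [Fin.val_succ]; omega),
        show csph m i.castSucc = some ⟨⟨aS m, haS m⟩⟩ from
          if_pos (by simp only [Fin.coe_castSucc]; omega)]
    exact Q_map_eq_of_comp_eq _ _ _ _ _ _ (delta_aS_eq m i j (by omega) (by omega))
  · rcases le_or_gt ((i : ℕ)) (m + 2) with h2 | h2
    · -- c_{j+1} = b, c_i = a, both faces none
      rw [show csph m j.succ = some ⟨⟨bS m, hbS m⟩⟩ from
            if_neg (by simp only [Fin.val_succ]; omega),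
          show csph m i.castSucc = some ⟨⟨aS m, haS m⟩⟩ from
            if_pos (by simp only [Fin.coe_castSucc]; omega)]
      rw [Q_map_eq_none _ _ _ (delta_bS_not_surj m i (by omega)),
          Q_map_eq_none _ _ _ (delta_aS_not_surj m j (by omega))]
    · -- both b
      rw [show csph m j.succ = some ⟨⟨bS m, hbS m⟩⟩ from
            if_neg (by simp only [Fin.val_succ]; omega),
          show csph m i.castSucc = some ⟨⟨bS m, hbS m⟩⟩ from
            if_neg (by simp only [Fin.coe_castSucc]; omega)]
      exact Q_map_eq_of_comp_eq _ _ _ _ _ _ (delta_bS_eq m i j (by omega) (by omega))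

lemma csph_no_filler (y : (Q.{u} (m + 3)) _⦋2 * m + 5⦌) :
    ¬ IsFiller (Q.{u} (m + 3)) (K := 2 * m + 3) y (csph m) := by
  intro hy
  have hy0 := hy 0
  have hyT := hy ⟨2 * m + 5, by omega⟩
  rw [show csph m 0 = some ⟨⟨aS m, haS m⟩⟩ from if_pos (by simp)] at hy0
  rw [show csph m ⟨2 * m + 5, by omega⟩ = some ⟨⟨bS m, hbS m⟩⟩ from if_neg (by simp only [Fin.mk_lt_mk]; omega)] at hyT
  obtain _ | ⟨⟨g, hg⟩⟩ := y
  · rw [Q_map_none] at hy0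
    cases hy0
  · rw [Q_map_some] at hy0
    rw [Q_map_some] at hyT
    split_ifs at hy0 hyT with hs1 hs2
    · have hg0 : SimplexCategory.δ (0 : Fin (2 * m + 6)) ≫ g = aS m :=
        congrArg (fun z => z.down.1) (Option.some_injective _ hy0)
      have hgT : SimplexCategory.δ (⟨2 * m + 5, by omega⟩ : Fin (2 * m + 6)) ≫ g = bS m :=
        congrArg (fun z => z.down.1) (Option.some_injective _ hyT)
      have h3 : m + 3 < 2 * m + 5 := by omega
      have h4 : m + 4 < 2 * m + 5 := by omega
      have h4' : m + 4 < 2 * m + 6 := by omega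
      have e1 := congrArg (fun (h : (⦋2 * m + 4⦌ : SimplexCategory) ⟶ ⦋m + 3⦌) =>
        ((SimplexCategory.Hom.toOrderHom h ⟨m + 3, h3⟩) : ℕ)) hg0
      have e2 := congrArg (fun (h : (⦋2 * m + 4⦌ : SimplexCategory) ⟶ ⦋m + 3⦌) =>
        ((SimplexCategory.Hom.toOrderHom h ⟨m + 4, h4⟩) : ℕ)) hgT
      simp only at e1 e2
      rw [comp_delta_apply, show (0 : Fin (2 * m + 6)).succAbove ⟨m + 3, h3⟩ = ⟨m + 4, h4'⟩ from
        Fin.ext (by rw [succAbove_val]; simp)] at e1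
      rw [comp_delta_apply, show (⟨2 * m + 5, by omega⟩ : Fin (2 * m + 6)).succAbove ⟨m + 4, h4⟩
          = ⟨m + 4, h4'⟩ from Fin.ext (by
            rw [succAbove_val]; simp only [Fin.mk_lt_mk]; split <;> omega)] at e2
      have ea : (((aS m).toOrderHom ⟨m + 3, h3⟩) : ℕ) = 2 := by
        show m + 3 - (m + 1) = 2; omega
      have eb : (((bS m).toOrderHom ⟨m + 4, h4⟩) : ℕ) = m + 3 := by
        show min (m + 4) (m + 3) = m + 3; omega
      rw [ea] at e1
      rw [eb] at e2
      omega

end Sphere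

/-- For every `n ≥ 3` there is an `n`-skeletal simplicial set containing a
`(2n-1)`-sphere with no filler, so it is not `(2n-2)`-coskeletal. -/
theorem exists_skeletal_not_coskeletal (n : ℕ) (hn : 3 ≤ n) :
    ∃ X : SSet, (∀ k : ℕ, n < k → ∀ x : X _⦋k⦌, IsDegen X x) ∧
      ∃ (K : ℕ) (_ : K + 2 = 2 * n - 1) (c : Fin (K + 3) → X _⦋K + 1⦌),
        IsSphere X c ∧ ∀ y : X _⦋K + 2⦌, ¬ IsFiller X y c := by

  obtain ⟨m, rfl⟩ : ∃ m, n = m + 3 := ⟨n - 3, by omega⟩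
  refine ⟨Q (m + 3), ?_, 2 * m + 3, by omega, csph m, csph_isSphere m, csph_no_filler m⟩
  intro k hk x
  obtain _ | ⟨⟨f, hf⟩⟩ := x
  · refine ⟨0, by omega, SimplexCategory.mkHom ⟨fun _ => 0, fun _ _ _ => le_refl _⟩,
      fun v => ⟨0, Fin.ext (show (0 : ℕ) = (v : ℕ) by
        have := v.isLt; simp only [SimplexCategory.len_mk] at this; omega)⟩, none, rfl⟩
  · refine ⟨m + 3, by omega, f, hf, some ⟨⟨𝟙 _, fun v => ⟨v, rfl⟩⟩⟩, ?_⟩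
    refine Eq.symm ((Q_map_some f (𝟙 _) _).trans ?_)
    rw [dif_pos (by simpa using hf)]
    simp
    rfl

end AufhebungSSet
end

section
/- (Eilenberg–Zilber lemma) Let X be a simplicial set. For each x ∈ X_n there exist a natural number k ≤ n, a nondegenerate k-simplex y ∈ X_k, and an epimorphism ε : [n] → [k] of Δ such that x = yε; moreover y and ε are unique with these properties. -/
open CategoryTheory Simplicial

namespace AufhebungSSet

section Sections

variable {n k : ℕ} (f : (⦋n⦌ : SimplexCategory) ⟶ ⦋k⦌)

/-- fiber of `f` over `j` as a finset. -/
def fiber (j : Fin (k + 1)) : Finset (Fin (n + 1)) :=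
  Finset.univ.filter fun a => f.toOrderHom a = j

lemma fiber_nonempty (hf : Function.Surjective f.toOrderHom) (j : Fin (k + 1)) :
    (fiber f j).Nonempty := by
  obtain ⟨a, ha⟩ := hf j
  exact ⟨a, Finset.mem_filter.mpr ⟨Finset.mem_univ _, ha⟩⟩

variable (hf : Function.Surjective f.toOrderHom)

/-- minimal element of the fiber. -/
noncomputable def fmin (j : Fin (k + 1)) : Fin (n + 1) :=
  (fiber f j).min' (fiber_nonempty f hf j)

/-- maximal element of the fiber. -/
noncomputable def fmax (j : Fin (k + 1)) : Fin (n + 1) :=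
  (fiber f j).max' (fiber_nonempty f hf j)

lemma f_fmin (j : Fin (k + 1)) : f.toOrderHom (fmin f hf j) = j :=
  (Finset.mem_filter.mp ((fiber f j).min'_mem (fiber_nonempty f hf j))).2

lemma f_fmax (j : Fin (k + 1)) : f.toOrderHom (fmax f hf j) = j :=
  (Finset.mem_filter.mp ((fiber f j).max'_mem (fiber_nonempty f hf j))).2

lemma fmin_le (a : Fin (n + 1)) : fmin f hf (f.toOrderHom a) ≤ a :=
  (fiber f _).min'_le a (Finset.mem_filter.mpr ⟨Finset.mem_univ _, rfl⟩)

lemma le_fmax (a : Fin (n + 1)) : a ≤ fmax f hf (f.toOrderHom a) :=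
  (fiber f _).le_max' a (Finset.mem_filter.mpr ⟨Finset.mem_univ _, rfl⟩)

lemma fmin_mono : Monotone (fmin f hf) := by
  intro j j' hj
  rcases eq_or_lt_of_le hj with rfl | hj
  · exact le_rfl
  · by_contra hlt
    push_neg at hlt
    have := f.toOrderHom.monotone hlt.le
    rw [f_fmin, f_fmin] at this
    exact absurd (lt_of_lt_of_le hj this) (lt_irrefl _)

lemma fmax_mono : Monotone (fmax f hf) := by
  intro j j' hj
  rcases eq_or_lt_of_le hj with rfl | hj
  · exact le_rfl
  · by_contra hlt
    push_neg at hlt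
    have := f.toOrderHom.monotone hlt.le
    rw [f_fmax, f_fmax] at this
    exact absurd (lt_of_lt_of_le hj this) (lt_irrefl _)

/-- The minimal section of a surjection `f : [n] ⟶ ⦋k⦌`. -/
noncomputable def minHom : (⦋k⦌ : SimplexCategory) ⟶ ⦋n⦌ :=
  SimplexCategory.mkHom ⟨fmin f hf, fmin_mono f hf⟩

/-- The maximal section of a surjection `f : [n] ⟶ ⦋k⦌`. -/
noncomputable def maxHom : (⦋k⦌ : SimplexCategory) ⟶ ⦋n⦌ :=
  SimplexCategory.mkHom ⟨fmax f hf, fmax_mono f hf⟩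

lemma minHom_comp : minHom f hf ≫ f = 𝟙 _ := by
  ext j : 3
  exact f_fmin f hf j

lemma maxHom_comp : maxHom f hf ≫ f = 𝟙 _ := by
  ext j : 3
  exact f_fmax f hf j

/-- A surjection is determined by its minimal and maximal sections. -/
lemma eq_of_sections (g : (⦋n⦌ : SimplexCategory) ⟶ ⦋k⦌)
    (h1 : minHom f hf ≫ g = 𝟙 _) (h2 : maxHom f hf ≫ g = 𝟙 _) : g = f := by
  ext a : 3
  have hmin : g.toOrderHom (fmin f hf (f.toOrderHom a)) = f.toOrderHom a := by
    have := congrArg (fun φ => SimplexCategory.Hom.toOrderHom φ (f.toOrderHom a)) h1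
    simpa [minHom] using this
  have hmax : g.toOrderHom (fmax f hf (f.toOrderHom a)) = f.toOrderHom a := by
    have := congrArg (fun φ => SimplexCategory.Hom.toOrderHom φ (f.toOrderHom a)) h2
    simpa [maxHom] using this
  have h3 : f.toOrderHom a ≤ g.toOrderHom a := by
    rw [← hmin]; exact g.toOrderHom.monotone (fmin_le f hf a)
  have h4 : g.toOrderHom a ≤ f.toOrderHom a := by
    rw [← hmax]; exact g.toOrderHom.monotone (le_fmax f hf a)
  exact le_antisymm h4 h3

end Sections

open Limits in
lemma injective_of_nondegen (X : SSet) {k₁ k₂ : ℕ} {y₁ : X _⦋k₁⦌} {y₂ : X _⦋k₂⦌}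
    (hy₁ : ¬ IsDegen X y₁) (φ : (⦋k₁⦌ : SimplexCategory) ⟶ ⦋k₂⦌)
    (h : y₁ = X.map φ.op y₂) : Function.Injective φ.toOrderHom := by
  have fac : factorThruImage φ ≫ image.ι φ = φ := image.fac φ
  have hm : (image φ).len ≤ k₁ := SimplexCategory.len_le_of_epi
    (factorThruImage φ)
  rcases lt_or_eq_of_le hm with hlt | heq
  · exfalso
    apply hy₁
    refine ⟨(image φ).len, hlt,
      factorThruImage φ ≫ eqToHom (SimplexCategory.mk_len (image φ)).symm, ?_,
      X.map (eqToHom (SimplexCategory.mk_len (image φ)) ≫ image.ι φ).op y₂, ?_⟩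
    · rw [← SimplexCategory.epi_iff_surjective]
      infer_instance
    · rw [h, ← fac, ← FunctorToTypes.map_comp_apply, ← op_comp]
      simp
  · haveI : Mono (factorThruImage φ) := by
      rw [SimplexCategory.mono_iff_injective]
      have hsurj : Function.Surjective (factorThruImage φ).toOrderHom :=
        SimplexCategory.epi_iff_surjective.mp inferInstance
      exact ((Fintype.bijective_iff_surjective_and_card _).mpr
        ⟨hsurj, by simp [heq]⟩).injective
    haveI : Mono φ := by rw [← fac]; exact mono_comp _ _
    exact SimplexCategory.mono_iff_injective.mp inferInstance

lemma sec_comp (X : SSet) {n k₁ k₂ : ℕ} {y₁ : X _⦋k₁⦌} {y₂ : X _⦋k₂⦌}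
    {ε₁ : (⦋n⦌ : SimplexCategory) ⟶ ⦋k₁⦌} {ε₂ : (⦋n⦌ : SimplexCategory) ⟶ ⦋k₂⦌}
    (hy₁ : ¬ IsDegen X y₁)
    (h : X.map ε₁.op y₁ = X.map ε₂.op y₂)
    (σ : (⦋k₁⦌ : SimplexCategory) ⟶ ⦋n⦌) (hσ : σ ≫ ε₁ = 𝟙 _) :
    y₁ = X.map (σ ≫ ε₂).op y₂ ∧ Function.Injective (σ ≫ ε₂).toOrderHom := by
  have hy : y₁ = X.map (σ ≫ ε₂).op y₂ := by
    have h0 : y₁ = X.map (σ ≫ ε₁).op y₁ := by rw [hσ]; simp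
    rw [h0, op_comp, FunctorToTypes.map_comp_apply, h,
      ← FunctorToTypes.map_comp_apply, ← op_comp]
  exact ⟨hy, injective_of_nondegen X hy₁ _ hy⟩

/-- Eilenberg–Zilber lemma: every `n`-simplex `x` is uniquely of the form `y ε` with
`y` a nondegenerate `k`-simplex, `k ≤ n`, and `ε : [n] → [k]` an epimorphism of `Δ`. -/
theorem eilenberg_zilber (X : SSet) (n : ℕ) (x : X _⦋n⦌) :
    ∃! p : Σ k : ℕ, X _⦋k⦌ × ((⦋n⦌ : SimplexCategory) ⟶ ⦋k⦌),
      p.1 ≤ n ∧ ¬ IsDegen X p.2.1 ∧ Function.Surjective p.2.2.toOrderHom ∧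
        x = X.map p.2.2.op p.2.1 := by
  classical
  set S := setOf fun k : ℕ => ∃ ε : (⦋n⦌ : SimplexCategory) ⟶ ⦋k⦌,
    Function.Surjective ε.toOrderHom ∧ ∃ y : X _⦋k⦌, x = X.map ε.op y with hSdef
  have hnS : n ∈ S := by
    refine ⟨𝟙 _, ?_, x, by simp⟩
    simp only [SimplexCategory.id_toOrderHom]
    exact fun j => ⟨j, rfl⟩
  set k := sInf S with hkdef
  have hkS : k ∈ S := Nat.sInf_mem ⟨n, hnS⟩
  obtain ⟨ε, hε, y, hy⟩ := hkS
  have hk : k ≤ n := Nat.sInf_le hnS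
  have hnd : ¬ IsDegen X y := by
    rintro ⟨m, hm, e, he, z, hz⟩
    have hmS : m ∈ S := ⟨ε ≫ e, by
      rw [SimplexCategory.comp_toOrderHom]; exact he.comp hε,
      z, by rw [hy, hz, ← FunctorToTypes.map_comp_apply, ← op_comp]⟩
    exact absurd (Nat.sInf_le hmS) (by omega)
  refine ⟨⟨k, y, ε⟩, ⟨hk, hnd, hε, hy⟩, ?_⟩
  rintro ⟨k', y', ε'⟩ ⟨hk', hnd', hε', hy'⟩
  have hxy : X.map ε'.op y' = X.map ε.op y := hy'.symm.trans hy
  have hxy' : X.map ε.op y = X.map ε'.op y' := hxy.symm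
  have s1 := sec_comp X hnd' hxy (minHom ε' hε') (minHom_comp ε' hε')
  have s2 := sec_comp X hnd' hxy (maxHom ε' hε') (maxHom_comp ε' hε')
  have s3 := sec_comp X hnd hxy' (minHom ε hε) (minHom_comp ε hε)
  have hk1 : k' ≤ k := by
    have := Fintype.card_le_of_injective _ s1.2
    simpa using this
  have hk2 : k ≤ k' := by
    have := Fintype.card_le_of_injective _ s3.2
    simpa using this
  have hkk : k' = k := le_antisymm hk1 hk2
  subst hkk
  haveI : Mono (minHom ε' hε' ≫ ε) := SimplexCategory.mono_iff_injective.mpr s1.2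
  haveI : Mono (maxHom ε' hε' ≫ ε) := SimplexCategory.mono_iff_injective.mpr s2.2
  have e1 : minHom ε' hε' ≫ ε = 𝟙 _ := SimplexCategory.eq_id_of_mono _
  have e2 : maxHom ε' hε' ≫ ε = 𝟙 _ := SimplexCategory.eq_id_of_mono _
  have hεε : ε = ε' := eq_of_sections ε' hε' ε e1 e2
  have hyy : y' = y := by
    have s11 : y' = X.map (minHom ε' hε' ≫ ε).op y := s1.1
    rw [s11, e1]; simp
  rw [hyy, ← hεε]

end AufhebungSSet
end

section
/- Let X be a simplicial set and x an n-simplex of X. The number of ordinals i with 0 ≤ i ≤ n−1 that properly reduce x is exactly dgn(x). -/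
open CategoryTheory Simplicial

namespace AufhebungSSet

open SimplexCategory in
lemma aux_map_comp_apply (X : SSet) {a b c : SimplexCategory} (f : a ⟶ b) (g : b ⟶ c)
    (x : X.obj (Opposite.op c)) : X.map (f ≫ g).op x = X.map f.op (X.map g.op x) := by
  rw [op_comp, FunctorToTypes.map_comp_apply]

open SimplexCategory in
/-- The set of degenerate directions of `x`. -/
def Dset (X : SSet) (n : ℕ) (x : X _⦋n + 1⦌) : Set (Fin (n + 1)) :=
  {i | ∃ z : X _⦋n⦌, x = X.map (σ i).op z}

open SimplexCategory in
lemma sigma_surjective {n : ℕ} (i : Fin (n + 1)) :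
    Function.Surjective (σ i).toOrderHom :=
  epi_iff_surjective.mp inferInstance

open SimplexCategory in
lemma properlyReduces_iff (X : SSet) {n : ℕ} (i : Fin (n + 1)) (x : X _⦋n + 1⦌) :
    ProperlyReduces X i x ↔ i ∈ Dset X n x := by
  constructor
  · intro h
    exact ⟨_, h⟩
  · rintro ⟨z, rfl⟩
    show _ = X.map (σ i).op (X.map (δ i.castSucc).op (X.map (σ i).op z))
    have hinner : X.map (δ i.castSucc).op (X.map (σ i).op z) = z := by
      rw [← aux_map_comp_apply, δ_comp_σ_self, op_id, FunctorToTypes.map_id_apply]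
    rw [hinner]

open SimplexCategory in
lemma collapse (X : SSet) : ∀ (d n : ℕ) (x : X _⦋n + 1⦌), d ≤ (Dset X n x).ncard →
    ∃ k, n + 1 = k + d ∧ ∃ ε : (⦋n + 1⦌ : SimplexCategory) ⟶ ⦋k⦌,
      Function.Surjective ε.toOrderHom ∧ ∃ y : X _⦋k⦌, x = X.map ε.op y := by
  intro d
  induction d with
  | zero =>
    intro n x _
    exact ⟨n + 1, rfl, 𝟙 _, Function.surjective_id, x, by simp⟩
  | succ d ih =>
    intro n x hd
    have hne : (Dset X n x).Nonempty := Set.nonempty_of_ncard_ne_zero (by omega)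
    obtain ⟨i, hi, hmin⟩ := Set.exists_min_image (Dset X n x) id (Set.toFinite _) hne
    obtain ⟨z, hz⟩ := hi
    have hzx : z = X.map (δ i.castSucc).op x := by
      rw [hz, ← aux_map_comp_apply, δ_comp_σ_self, op_id, FunctorToTypes.map_id_apply]
    cases n with
    | zero =>
      have hcard : (Dset X 0 x).ncard ≤ 1 := by
        have h1 := Set.ncard_le_ncard (Set.subset_univ (Dset X 0 x)) (Set.toFinite _)
        simpa [Set.ncard_univ] using h1
      have hd0 : d = 0 := by omega
      subst hd0
      exact ⟨0, rfl, σ i, sigma_surjective i, z, hz⟩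
    | succ m =>
      have hsub : d ≤ (Dset X m z).ncard := by
        have h1 : (Dset X (m + 1) x \ {i}).ncard ≤ (Dset X m z).ncard := by
          apply Set.ncard_le_ncard_of_injOn
            (fun j => (⟨j.val - 1, by have := j.isLt; omega⟩ : Fin (m + 1)))
          · rintro j ⟨⟨w, hw⟩, hji⟩
            have hij : i < j := by
              rcases lt_or_eq_of_le (hmin j ⟨w, hw⟩) with h | h
              · exact h
              · exact absurd h.symm hji
            have hj1 : 1 ≤ j.val := by
              have := Fin.lt_def.mp hij; omega
            have hijv := Fin.lt_def.mp hij
            set j₀ : Fin (m + 1) := ⟨j.val - 1, by have := j.isLt; omega⟩ with hj₀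
            have hjs : j = j₀.succ := by
              apply Fin.ext
              show j.val = j.val - 1 + 1
              omega
            have hcomp : δ i.castSucc ≫ σ j = σ j₀ ≫ δ i := by
              rw [hjs]
              exact δ_comp_σ_of_le (by
                rw [Fin.le_def]
                show i.val ≤ j.val - 1
                omega)
            refine ⟨X.map (δ i).op w, ?_⟩
            rw [hzx, hw, ← aux_map_comp_apply, hcomp, aux_map_comp_apply]
          · rintro j ⟨hj, hji⟩ j' ⟨hj', hji'⟩ hval
            have hij : i < j := lt_of_le_of_ne (hmin j hj) (Ne.symm hji)
            have hij' : i < j' := lt_of_le_of_ne (hmin j' hj') (Ne.symm hji')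
            have h1 := Fin.lt_def.mp hij
            have h2 := Fin.lt_def.mp hij'
            have hv : j.val - 1 = j'.val - 1 := congrArg Fin.val hval
            apply Fin.ext
            omega
        have h2 : (Dset X (m + 1) x \ {i}).ncard = (Dset X (m + 1) x).ncard - 1 :=
          Set.ncard_sdiff_singleton_of_mem (show i ∈ Dset X (m + 1) x from ⟨z, hz⟩)
        omega
      obtain ⟨k, hk, ε', hs', y, hy⟩ := ih m z hsub
      refine ⟨k, by omega, σ i ≫ ε', ?_, y, ?_⟩
      · rw [comp_toOrderHom, OrderHom.comp_coe]
        exact Function.Surjective.comp hs' (sigma_surjective i)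
      · rw [aux_map_comp_apply, ← hy]
        exact hz

lemma fin_key {n : ℕ} (i : Fin (n + 1)) (a : Fin (n + 2)) :
    Fin.succAbove i.castSucc (Fin.predAbove i a) = a ∨
    (a = i.castSucc ∧ Fin.succAbove i.castSucc (Fin.predAbove i a) = i.succ) := by
  rcases lt_trichotomy a.val i.val with hlt | heq | hgt
  · left
    rw [Fin.predAbove_of_le_castSucc _ _ (by rw [Fin.le_def]; exact le_of_lt hlt),
      Fin.succAbove_of_castSucc_lt _ _ (by rw [Fin.lt_def]; exact hlt),
      Fin.castSucc_castPred]
  · right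
    have ha : a = i.castSucc := Fin.ext heq
    refine ⟨ha, ?_⟩
    rw [Fin.predAbove_of_le_castSucc _ _ (by rw [Fin.le_def]; exact le_of_eq heq),
      Fin.succAbove_of_le_castSucc _ _ (by rw [Fin.le_def]; exact le_of_eq heq.symm)]
    apply Fin.ext
    show a.val + 1 = i.val + 1
    omega
  · left
    have h1 : Fin.castSucc i < a := by rw [Fin.lt_def]; exact hgt
    rw [Fin.predAbove_of_castSucc_lt _ _ h1,
      Fin.succAbove_of_le_castSucc _ _ (by rw [Fin.le_def]; show i.val ≤ a.val - 1; omega),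
      Fin.succ_pred]

open SimplexCategory in
lemma flat_factor {n k : ℕ} (ε : (⦋n + 1⦌ : SimplexCategory) ⟶ ⦋k⦌) (i : Fin (n + 1))
    (h : ε.toOrderHom i.castSucc = ε.toOrderHom i.succ) :
    σ i ≫ δ i.castSucc ≫ ε = ε := by
  apply Hom.ext
  apply OrderHom.ext
  funext a
  simp only [comp_toOrderHom, OrderHom.comp_coe, Function.comp_apply]
  show ε.toOrderHom ((δ i.castSucc).toOrderHom ((σ i).toOrderHom a)) = ε.toOrderHom a
  have hσδ : (δ i.castSucc).toOrderHom ((σ i).toOrderHom a)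
      = Fin.succAbove i.castSucc (Fin.predAbove i a) := rfl
  rcases fin_key i a with hk | ⟨ha, hk⟩
  · rw [hσδ, hk]
  · rw [hσδ, hk, ha, h]

open SimplexCategory in
lemma card_flats_ge {n k : ℕ} (ε : (⦋n + 1⦌ : SimplexCategory) ⟶ ⦋k⦌) :
    n + 1 - k ≤ ({i |
      ε.toOrderHom i.castSucc = ε.toOrderHom i.succ} : Set (Fin (n + 1))).ncard := by
  set F := ({i | ε.toOrderHom i.castSucc = ε.toOrderHom i.succ} : Set (Fin (n + 1))) with hF
  have hcompl : Fᶜ = ({i | ε.toOrderHom i.castSucc ≠ ε.toOrderHom i.succ} : Set (Fin (n + 1))) := by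
    ext i; simp [hF]
  have hN : (Fᶜ).ncard ≤ k := by
    rw [hcompl]
    cases k with
    | zero =>
      have : ({i | ε.toOrderHom i.castSucc ≠ ε.toOrderHom i.succ} : Set (Fin (n + 1))) = ∅ := by
        ext i
        simp only [Set.mem_setOf_eq, Set.mem_empty_iff_false, iff_false, not_not]
        apply Fin.ext
        have h1 : (ε.toOrderHom i.castSucc).val < 1 := (ε.toOrderHom i.castSucc).isLt
        have h2 : (ε.toOrderHom i.succ).val < 1 := (ε.toOrderHom i.succ).isLt
        omega
      rw [this, Set.ncard_empty]
    | succ k' =>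
      have hle : ∀ i : Fin (n + 1), ε.toOrderHom i.castSucc ≠ ε.toOrderHom i.succ →
          (ε.toOrderHom i.castSucc : ℕ) < (ε.toOrderHom i.succ : ℕ) := by
        intro i hi
        have hm : ε.toOrderHom i.castSucc ≤ ε.toOrderHom i.succ :=
          ε.toOrderHom.monotone (by simp [Fin.le_def])
        exact Fin.lt_def.mp (lt_of_le_of_ne hm hi)
      have h1 : ({i | ε.toOrderHom i.castSucc ≠ ε.toOrderHom i.succ} : Set (Fin (n + 1))).ncard ≤
          (Set.univ : Set (Fin (k' + 1))).ncard := by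
        apply Set.ncard_le_ncard_of_injOn
          (fun i => (⟨(ε.toOrderHom i.succ : ℕ) - 1, by
            have h0 : (ε.toOrderHom i.succ).val < k' + 2 := (ε.toOrderHom i.succ).isLt
            omega⟩ : Fin (k' + 1)))
        · intro a _; trivial
        · intro i hi i' hi' hval
          have hvv : (ε.toOrderHom i.succ : ℕ) - 1 = (ε.toOrderHom i'.succ : ℕ) - 1 :=
            congrArg Fin.val hval
          have hp : ∀ a a' : Fin (n + 1), a.val < a'.val →
              ε.toOrderHom a'.castSucc ≠ ε.toOrderHom a'.succ →
              (ε.toOrderHom a.succ : ℕ) < (ε.toOrderHom a'.succ : ℕ) := by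
            intro a a' hlt hne
            have h2 : ε.toOrderHom a.succ ≤ ε.toOrderHom a'.castSucc :=
              ε.toOrderHom.monotone (by simp [Fin.le_def]; omega)
            exact lt_of_le_of_lt (Fin.le_def.mp h2) (hle a' hne)
          have hg1 : 1 ≤ (ε.toOrderHom i.succ : ℕ) := by
            have := hle i hi; omega
          have hg1' : 1 ≤ (ε.toOrderHom i'.succ : ℕ) := by
            have := hle i' hi'; omega
          rcases lt_trichotomy i.val i'.val with hlt | heq | hgt
          · have := hp i i' hlt hi'; omega
          · exact Fin.ext heq
          · have := hp i' i hgt hi; omega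
      simpa [Set.ncard_univ, Nat.card_eq_fintype_card] using h1
  have htot : F.ncard + (Fᶜ).ncard = n + 1 := by
    rw [Set.ncard_add_ncard_compl]
    simp [Nat.card_eq_fintype_card]
  omega

/-- An `n`-simplex is properly reduced by exactly `dgn x` ordinals `0 ≤ i ≤ n-1`
(for `n = 0` there are no such ordinals and `dgn x = 0`). -/
theorem card_properlyReduces (X : SSet) :
    (∀ x : X _⦋0⦌, dgn X x = 0) ∧
    (∀ (n : ℕ) (x : X _⦋n + 1⦌),
      Set.ncard (setOf fun i : Fin (n + 1) => ProperlyReduces X i x) = dgn X x) := by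
  constructor
  · intro x
    simp [dgn]
  · intro n x
    open SimplexCategory in
    have hset : (setOf fun i : Fin (n + 1) => ProperlyReduces X i x) = Dset X n x := by
      ext i; exact properlyReduces_iff X i x
    rw [hset]
    set T := ({k | ∃ ε : (⦋n + 1⦌ : SimplexCategory) ⟶ ⦋k⦌,
      Function.Surjective ε.toOrderHom ∧ ∃ y : X _⦋k⦌, x = X.map ε.op y} : Set ℕ) with hT
    have hdgn : dgn X x = n + 1 - sInf T := rfl
    have hne : T.Nonempty := ⟨n + 1, 𝟙 _, Function.surjective_id, x, by simp⟩
    -- upper bound : dgn X x ≥ ncard (Dset X n x)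
    obtain ⟨k, hk, ε, hεs, y, hy⟩ := collapse X ((Dset X n x).ncard) n x le_rfl
    have hkT : k ∈ T := ⟨ε, hεs, y, hy⟩
    have hinf_le : sInf T ≤ k := Nat.sInf_le hkT
    -- lower bound : ncard ≥ n + 1 - sInf T
    obtain ⟨ε₀, hε₀s, y₀, hy₀⟩ := Nat.sInf_mem hne
    have hflat : ({i |
        ε₀.toOrderHom i.castSucc = ε₀.toOrderHom i.succ} : Set (Fin (n + 1))) ⊆ Dset X n x := by
      intro i hi
      refine ⟨X.map (δ i.castSucc ≫ ε₀).op y₀, ?_⟩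
      rw [← aux_map_comp_apply, flat_factor ε₀ i hi]
      exact hy₀
    have hlow : n + 1 - sInf T ≤ (Dset X n x).ncard :=
      le_trans (card_flats_ge ε₀) (Set.ncard_le_ncard hflat (Set.toFinite _))
    omega

end AufhebungSSet
end

section
/- Let X be a simplicial set and x an n-simplex of X. If an ordinal i with 0 ≤ i ≤ n−1 properly reduces x, then i+1 reduces x. -/
open CategoryTheory Simplicial

namespace AufhebungSSet

/-- The defining set of `dgn`. -/
def degSet (X : SSet) {n : ℕ} (x : X _⦋n⦌) : Set ℕ :=
  setOf fun k : ℕ => ∃ ε : (⦋n⦌ : SimplexCategory) ⟶ ⦋k⦌,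
    Function.Surjective ε.toOrderHom ∧ ∃ y : X _⦋k⦌, x = X.map ε.op y

lemma self_mem_degSet (X : SSet) {n : ℕ} (x : X _⦋n⦌) : n ∈ degSet X x :=
  ⟨𝟙 _, Function.surjective_id, x, by simp⟩

lemma surj_comp {a b c : SimplexCategory} (f : a ⟶ b) (g : b ⟶ c)
    (hf : Function.Surjective f.toOrderHom) (hg : Function.Surjective g.toOrderHom) :
    Function.Surjective (f ≫ g).toOrderHom := by
  rw [SimplexCategory.comp_toOrderHom]
  exact hg.comp hf

lemma sInf_degSet_map_σ (X : SSet) {n : ℕ} (y : X _⦋n⦌) (i : Fin (n + 1)) :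
    sInf (degSet X (X.map (SimplexCategory.σ i).op y)) = sInf (degSet X y) := by
  set x := X.map (SimplexCategory.σ i).op y with hx
  have σsurj : Function.Surjective (SimplexCategory.σ i).toOrderHom := by
    rw [← SimplexCategory.epi_iff_surjective]; infer_instance
  apply le_antisymm
  · obtain ⟨ε, hε, w, hw⟩ := Nat.sInf_mem ⟨n, self_mem_degSet X y⟩
    refine Nat.sInf_le ⟨SimplexCategory.σ i ≫ ε, surj_comp _ _ σsurj hε, w, ?_⟩
    rw [op_comp, FunctorToTypes.map_comp_apply, ← hw, ← hx]
  · set k := sInf (degSet X x) with hk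
    obtain ⟨ε, hε, w, hw⟩ := Nat.sInf_mem (⟨n + 1, self_mem_degSet X x⟩ :
      (degSet X x).Nonempty)
    have hy : y = X.map (SimplexCategory.δ i.succ).op x := by
      rw [hx, ← FunctorToTypes.map_comp_apply, ← op_comp,
        SimplexCategory.δ_comp_σ_succ, op_id, FunctorToTypes.map_id_apply]
    set θ : (⦋n⦌ : SimplexCategory) ⟶ ⦋k⦌ := SimplexCategory.δ i.succ ≫ ε with hθ
    have him : Limits.image θ = SimplexCategory.mk (Limits.image θ).len :=
      (SimplexCategory.mk_len _).symm
    set e : (⦋n⦌ : SimplexCategory) ⟶ SimplexCategory.mk (Limits.image θ).len :=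
      Limits.factorThruImage θ ≫ eqToHom him with he
    set μ : SimplexCategory.mk (Limits.image θ).len ⟶ ⦋k⦌ :=
      eqToHom him.symm ≫ Limits.image.ι θ with hμ
    have hfac : e ≫ μ = θ := by simp [he, hμ]
    have hmono : Mono μ := by rw [hμ]; exact mono_comp _ _
    have hlen : (Limits.image θ).len ≤ k := SimplexCategory.len_le_of_mono μ
    have hepi : Epi e := by rw [he]; exact epi_comp _ _
    calc sInf (degSet X y) ≤ (Limits.image θ).len := by
          refine Nat.sInf_le ⟨e, SimplexCategory.epi_iff_surjective.mp hepi, X.map μ.op w, ?_⟩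
          rw [← FunctorToTypes.map_comp_apply, ← op_comp, hfac, hθ, op_comp,
            FunctorToTypes.map_comp_apply, ← hw, ← hy]
      _ ≤ k := hlen

/-- If `i` properly reduces `x`, then `i + 1` reduces `x`. -/
theorem reduces_succ_of_properlyReduces (X : SSet) (n : ℕ) (x : X _⦋n + 1⦌)
    (i : Fin (n + 1)) (h : ProperlyReduces X i x) :
    Reduces X i.succ x := by
  set y := X.map (SimplexCategory.δ i.castSucc).op x with hy
  have hx : x = X.map (SimplexCategory.σ i).op y := h
  have hyx : X.map (SimplexCategory.δ i.succ).op x = y := by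
    rw [hx, ← FunctorToTypes.map_comp_apply, ← op_comp,
      SimplexCategory.δ_comp_σ_succ, op_id, FunctorToTypes.map_id_apply]
  show dgn X (X.map (SimplexCategory.δ i.succ).op x) + 1 = dgn X x
  rw [hyx]
  have key : sInf (degSet X x) = sInf (degSet X y) := by
    rw [hx]; exact sInf_degSet_map_σ X y i
  have hle : sInf (degSet X y) ≤ n := Nat.sInf_le (self_mem_degSet X y)
  show n - sInf (degSet X y) + 1 = (n + 1) - sInf (degSet X x)
  rw [key]
  omega

end AufhebungSSet
end

section
/- Let X be a simplicial set and let c be a k-sphere in X (k ≥ 1) with all faces c_0, …, c_k degenerate. Let r be the minimal value of dgn(c_i) over 0 ≤ i ≤ k and let m be the smallest ordinal with dgn(c_m) = r. If an ordinal j reduces c_m, then j ≥ m and m properly reduces c_{j+1}. -/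
open CategoryTheory Simplicial

namespace AufhebungSSet

open SimplexCategory

def S (X : SSet) {n : ℕ} (x : X _⦋n⦌) : Set ℕ :=
  setOf fun k : ℕ => ∃ ε : (⦋n⦌ : SimplexCategory) ⟶ ⦋k⦌,
    Function.Surjective ε.toOrderHom ∧ ∃ y : X _⦋k⦌, x = X.map ε.op y

lemma map_map (X : SSet) {a b c : ℕ} (f : (⦋a⦌ : SimplexCategory) ⟶ ⦋b⦌)
    (g : (⦋b⦌ : SimplexCategory) ⟶ ⦋c⦌) (w : X _⦋c⦌) :
    X.map f.op (X.map g.op w) = X.map (f ≫ g).op w := by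
  rw [op_comp, X.map_comp]; rfl

lemma self_mem_S (X : SSet) {n : ℕ} (x : X _⦋n⦌) : n ∈ S X x := by
  refine ⟨𝟙 _, ?_, x, by simp⟩
  intro b; exact ⟨b, rfl⟩

lemma S_nonempty (X : SSet) {n : ℕ} (x : X _⦋n⦌) : (S X x).Nonempty :=
  ⟨n, self_mem_S X x⟩

lemma sInf_S_le_self (X : SSet) {n : ℕ} (x : X _⦋n⦌) : sInf (S X x) ≤ n :=
  Nat.sInf_le (self_mem_S X x)

lemma surjective_to_zero {a : ℕ} (φ : (⦋a⦌ : SimplexCategory) ⟶ ⦋0⦌) :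
    Function.Surjective φ.toOrderHom := by
  intro b
  refine ⟨0, Fin.ext ?_⟩
  have h1 : ((φ.toOrderHom 0 : Fin (⦋0⦌.len + 1)) : ℕ) < ⦋0⦌.len + 1 := (φ.toOrderHom 0).2
  have h2 : (b : ℕ) < ⦋0⦌.len + 1 := b.2
  simp only [SimplexCategory.len_mk] at h1 h2
  omega

lemma sInf_S_map_le (X : SSet) : ∀ (k : ℕ) {a : ℕ} (φ : (⦋a⦌ : SimplexCategory) ⟶ ⦋k⦌)
    (w : X _⦋k⦌), sInf (S X (X.map φ.op w)) ≤ k := by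
  intro k
  induction k with
  | zero =>
    intro a φ w
    exact Nat.sInf_le ⟨φ, surjective_to_zero φ, w, rfl⟩
  | succ k ih =>
    intro a φ w
    by_cases hsurj : Function.Surjective φ.toOrderHom
    · exact Nat.sInf_le ⟨φ, hsurj, w, rfl⟩
    · obtain ⟨i, θ, hθ⟩ := eq_comp_δ_of_not_surjective φ hsurj
      have : X.map φ.op w = X.map θ.op (X.map (δ i).op w) := by
        rw [map_map, ← hθ]
      rw [this]
      exact (ih θ _).trans (Nat.le_succ k)

lemma sInf_S_map_le_sInf (X : SSet) {a b : ℕ} (φ : (⦋a⦌ : SimplexCategory) ⟶ ⦋b⦌)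
    (v : X _⦋b⦌) : sInf (S X (X.map φ.op v)) ≤ sInf (S X v) := by
  have hk := Nat.sInf_mem (S_nonempty X v)
  set k := sInf (S X v) with hdef
  obtain ⟨ε, _, y, hy⟩ := hk
  calc sInf (S X (X.map φ.op v)) = sInf (S X (X.map (φ ≫ ε).op y)) := by rw [hy, map_map]
    _ ≤ k := sInf_S_map_le X k _ y

lemma dgn_eq (X : SSet) {n : ℕ} (x : X _⦋n⦌) : dgn X x = n - sInf (S X x) := rfl

/-- F1: the degeneracy of a face drops by at most one. -/
lemma dgn_le_face (X : SSet) {n : ℕ} (x : X _⦋n + 1⦌) (i : Fin (n + 2)) :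
    dgn X x ≤ dgn X (X.map (δ i).op x) + 1 := by
  have h1 : sInf (S X (X.map (δ i).op x)) ≤ sInf (S X x) := sInf_S_map_le_sInf X (δ i) x
  have h3 : sInf (S X x) ≤ n + 1 := sInf_S_le_self X x
  rw [dgn_eq, dgn_eq]
  omega

lemma dgn_sigma (X : SSet) {n : ℕ} (z : X _⦋n⦌) (p : Fin (n + 1)) :
    dgn X (X.map (σ p).op z) = dgn X z + 1 := by
  have h1 : sInf (S X (X.map (σ p).op z)) ≤ sInf (S X z) := sInf_S_map_le_sInf X _ z
  have hz : X.map (δ p.castSucc).op (X.map (σ p).op z) = z := by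
    rw [map_map, δ_comp_σ_self]
    simp
  have h2 := sInf_S_map_le_sInf X (δ p.castSucc) (X.map (σ p).op z)
  rw [hz] at h2
  have h3 : sInf (S X z) ≤ n := sInf_S_le_self X z
  rw [dgn_eq, dgn_eq]
  omega

lemma properlyReduces_of_rep (X : SSet) {n k : ℕ} (ε : (⦋n + 1⦌ : SimplexCategory) ⟶ ⦋k⦌)
    (y : X _⦋k⦌) (p : Fin (n + 1)) (h : ε.toOrderHom p.castSucc = ε.toOrderHom p.succ) :
    X.map ε.op y = X.map (σ p).op (X.map (δ p.castSucc).op (X.map ε.op y)) := by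
  rw [map_map, map_map]
  have hcomp : (σ p ≫ δ p.castSucc) ≫ ε = ε := by
    apply Hom.ext
    apply OrderHom.ext
    funext t
    simp only [comp_toOrderHom, OrderHom.comp_coe, Function.comp_apply]
    have hσ : (σ p).toOrderHom t = p.predAbove t := rfl
    have hδ : ∀ u : Fin (n + 1), (δ p.castSucc).toOrderHom u = p.castSucc.succAbove u :=
      fun u => rfl
    rw [hσ, hδ]
    rcases lt_trichotomy t p.castSucc with ht | ht | ht
    · rw [Fin.predAbove_of_le_castSucc _ _ ht.le,
        Fin.succAbove_of_castSucc_lt _ _ (by rwa [Fin.castSucc_castPred]),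
        Fin.castSucc_castPred]
    · rw [ht, Fin.predAbove_castSucc_self, Fin.succAbove_of_le_castSucc _ _ le_rfl]
      exact h.symm
    · rw [Fin.predAbove_of_castSucc_lt _ _ ht,
        Fin.succAbove_of_le_castSucc _ _ (by
          have hlt : (p : ℕ) < (t : ℕ) := by simpa using Fin.lt_def.mp ht
          rw [Fin.castSucc_le_castSucc_iff, Fin.le_def, Fin.coe_pred]
          omega), Fin.succ_pred]
  rw [hcomp]

-- appended to layer2 for testing
/-- If the `q`-face of `x = ε y` still has `sInf S ≥ k`, then `ε ∘ δ q` is surjective,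
so `ε` takes the value `ε q` somewhere else. -/
lemma exists_ne_eq_of_face (X : SSet) {n : ℕ} : ∀ (k : ℕ)
    (ε : (⦋n + 1⦌ : SimplexCategory) ⟶ ⦋k⦌) (y : X _⦋k⦌) (q : Fin (n + 2)),
    k ≤ sInf (S X (X.map (δ q).op (X.map ε.op y))) →
    ∃ s : Fin (n + 2), s ≠ q ∧ ε.toOrderHom s = ε.toOrderHom q := by
  intro k ε y q hfq
  have hsurj : Function.Surjective (δ q ≫ ε).toOrderHom := by
    cases k with
    | zero => exact surjective_to_zero _
    | succ k =>
      by_contra hns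
      obtain ⟨i, θ, hθ⟩ := eq_comp_δ_of_not_surjective (δ q ≫ ε) hns
      have heq : X.map (δ q).op (X.map ε.op y) = X.map θ.op (X.map (δ i).op y) := by
        rw [map_map, map_map, ← hθ]
      rw [heq] at hfq
      have := sInf_S_map_le X k θ (X.map (δ i).op y)
      omega
  obtain ⟨t, ht⟩ := hsurj (ε.toOrderHom q)
  refine ⟨(δ q).toOrderHom t, ?_, ?_⟩
  · show q.succAbove t ≠ q
    exact Fin.succAbove_ne q t
  · simpa only [comp_toOrderHom, OrderHom.comp_coe, Function.comp_apply] using ht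

/-- F4: an index that reduces `x` is adjacent to (or equal to) an index that
properly reduces `x`. -/
lemma exists_properlyReduces_of_reduces (X : SSet) {n : ℕ} (x : X _⦋n + 1⦌) (q : Fin (n + 2))
    (hq : Reduces X q x) :
    ∃ p : Fin (n + 1), ProperlyReduces X p x ∧ ((q : ℕ) = p ∨ (q : ℕ) = (p : ℕ) + 1) := by
  have hq' : dgn X (X.map (δ q).op x) + 1 = dgn X x := hq
  have hmem := Nat.sInf_mem (S_nonempty X x)
  set k := sInf (S X x) with hdef
  obtain ⟨ε, hε, y, hy⟩ := hmem
  have hkn : k ≤ n + 1 := sInf_S_le_self X x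
  have hfle : sInf (S X (X.map (δ q).op x)) ≤ k := sInf_S_map_le_sInf X (δ q) x
  have hfn : sInf (S X (X.map (δ q).op x)) ≤ n := sInf_S_le_self X _
  rw [dgn_eq, dgn_eq, ← hdef] at hq'
  -- from the arithmetic: the face has sInf S exactly k, and k ≤ n
  have hfk : sInf (S X (X.map (δ q).op x)) = k := by omega
  have hk : k ≤ sInf (S X (X.map (δ q).op (X.map ε.op y))) := by rw [← hy]; omega
  obtain ⟨s, hsne, hsval⟩ := exists_ne_eq_of_face X k ε y q hk
  have hmono := ε.toOrderHom.monotone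
  rcases lt_or_gt_of_ne hsne with hlt | hgt
  · -- s < q : take p with p + 1 = q
    have hq1 : 1 ≤ (q : ℕ) := by
      have : (s : ℕ) < (q : ℕ) := hlt
      omega
    refine ⟨⟨(q : ℕ) - 1, by first | omega | (simp only [SimplexCategory.len_mk]; omega)⟩, ?_, Or.inr (by show (q : ℕ) = (q : ℕ) - 1 + 1; omega)⟩
    have hcs : ε.toOrderHom (Fin.castSucc ⟨(q : ℕ) - 1, by first | omega | (simp only [SimplexCategory.len_mk]; omega)⟩) =
        ε.toOrderHom (Fin.succ ⟨(q : ℕ) - 1, by first | omega | (simp only [SimplexCategory.len_mk]; omega)⟩) := by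
      have hsuccq : (Fin.succ ⟨(q : ℕ) - 1, by first | omega | (simp only [SimplexCategory.len_mk]; omega)⟩ : Fin (n + 2)) = q := by
        apply Fin.ext; show (q : ℕ) - 1 + 1 = (q : ℕ); omega
      rw [hsuccq]
      apply le_antisymm
      · exact hmono (by rw [Fin.le_def]; show (q : ℕ) - 1 ≤ (q : ℕ); omega)
      · rw [← hsval]
        exact hmono (by
          rw [Fin.le_def]
          show (s : ℕ) ≤ (q : ℕ) - 1
          have hsq : (s : ℕ) < (q : ℕ) := hlt
          omega)
    show x = _
    have hpr := properlyReduces_of_rep X ε y _ hcs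
    rw [← hy] at hpr
    exact hpr
  · -- q < s : take p = q
    have hqn : (q : ℕ) < n + 1 := by
      have h1 : (q : ℕ) < (s : ℕ) := hgt
      have h2 : (s : ℕ) < n + 2 := s.isLt
      omega
    have _hqn' := hqn
    refine ⟨⟨(q : ℕ), by first | omega | (simp only [SimplexCategory.len_mk]; omega)⟩, ?_, Or.inl rfl⟩
    have hcs : ε.toOrderHom (Fin.castSucc ⟨(q : ℕ), by first | omega | (simp only [SimplexCategory.len_mk]; omega)⟩) =
        ε.toOrderHom (Fin.succ ⟨(q : ℕ), by first | omega | (simp only [SimplexCategory.len_mk]; omega)⟩) := by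
      have hcq : (Fin.castSucc ⟨(q : ℕ), by first | omega | (simp only [SimplexCategory.len_mk]; omega)⟩ : Fin (n + 2)) = q := Fin.ext rfl
      rw [hcq]
      apply le_antisymm
      · exact hmono (by rw [Fin.le_def]; show (q : ℕ) ≤ (q : ℕ) + 1; omega)
      · rw [← hsval]
        exact hmono (by
          rw [Fin.le_def]
          show (q : ℕ) + 1 ≤ (s : ℕ)
          have hqs : (q : ℕ) < (s : ℕ) := hgt
          omega)
    show x = _
    rw [hy]
    exact properlyReduces_of_rep X ε y _ hcs

/-- If all faces of a sphere `c` are degenerate, `r` is the minimal degeneracy,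
`m` is the first face of degeneracy `r`, and `j` reduces `c_m`, then `j ≥ m` and `m`
properly reduces `c_{j+1}`. -/
theorem techlem_a (X : SSet) (K : ℕ) (c : Fin (K + 3) → X _⦋K + 1⦌) (hc : IsSphere X c)
    (r : ℕ) (hr : ∀ u : Fin (K + 3), r ≤ dgn X (c u))
    (m : Fin (K + 3)) (hm : dgn X (c m) = r)
    (hmmin : ∀ u : Fin (K + 3), dgn X (c u) = r → m ≤ u)
    (hdeg : ∀ u : Fin (K + 3), IsDegen X (c u))
    (j : Fin (K + 2)) (hj : Reduces X j (c m)) :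
    (m : ℕ) ≤ (j : ℕ) ∧
      ∃ h : (m : ℕ) < K + 1, ProperlyReduces X ⟨(m : ℕ), h⟩ (c j.succ) := by
  have hq : dgn X (X.map (δ j).op (c m)) + 1 = dgn X (c m) := hj
  -- Part 1 : m ≤ j
  have hmj : (m : ℕ) ≤ (j : ℕ) := by
    by_contra hlt
    push_neg at hlt
    have hm1 : 1 ≤ (m : ℕ) := by omega
    have hmK : (m : ℕ) < K + 3 := m.isLt
    set v : Fin (K + 2) := ⟨(m : ℕ) - 1, by omega⟩ with hv
    have hvs : v.succ = m := by apply Fin.ext; show (m : ℕ) - 1 + 1 = (m : ℕ); omega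
    have hjv : j ≤ v := by rw [Fin.le_def]; show (j : ℕ) ≤ (m : ℕ) - 1; omega
    have hsph := hc j v hjv
    rw [hvs] at hsph
    have hF1 := dgn_le_face X (c j.castSucc) v
    rw [← hsph] at hF1
    have hge := hr j.castSucc
    have heq : dgn X (c j.castSucc) = r := by omega
    have hle := hmmin j.castSucc heq
    rw [Fin.le_def] at hle
    have : (j.castSucc : ℕ) = (j : ℕ) := rfl
    omega
  refine ⟨hmj, ?_⟩
  have hjK : (j : ℕ) < K + 2 := j.isLt
  set m' : Fin (K + 2) := ⟨(m : ℕ), by omega⟩ with hm'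
  have hmc : m'.castSucc = m := by apply Fin.ext; rfl
  have hsph := hc m' j (by rw [Fin.le_def]; exact hmj)
  rw [hmc] at hsph
  have hface : dgn X (X.map (δ m').op (c j.succ)) + 1 = r := by rw [hsph]; omega
  have hF1 := dgn_le_face X (c j.succ) m'
  have hge := hr j.succ
  have hds : dgn X (c j.succ) = r := by omega
  have hred : Reduces X m' (c j.succ) := by
    show dgn X (X.map (δ m').op (c j.succ)) + 1 = dgn X (c j.succ)
    omega
  obtain ⟨p, hp, hcase⟩ := exists_properlyReduces_of_reduces X (c j.succ) m' hred
  rcases hcase with h1 | h1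
  · have hK : (m : ℕ) < K + 1 := by have := p.isLt; have : (m' : ℕ) = (m : ℕ) := rfl; omega
    refine ⟨hK, ?_⟩
    have hpe : (⟨(m : ℕ), hK⟩ : Fin (K + 1)) = p := by
      apply Fin.ext; show (m : ℕ) = (p : ℕ); exact h1
    rw [hpe]
    exact hp
  · -- m = p + 1 : contradiction with minimality of m
    exfalso
    have hmp : (m : ℕ) = (p : ℕ) + 1 := h1
    -- p.castSucc reduces c j.succ
    have hz : dgn X (X.map (δ p.castSucc).op (c j.succ)) + 1 = dgn X (c j.succ) := by
      have hsig := dgn_sigma X (X.map (δ p.castSucc).op (c j.succ)) p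
      rw [← hp] at hsig
      omega
    have hpj : p.castSucc ≤ j := by
      rw [Fin.le_def]; show (p : ℕ) ≤ (j : ℕ); omega
    have hsph2 := hc p.castSucc j hpj
    have hF2 := dgn_le_face X (c p.castSucc.castSucc) j
    rw [← hsph2] at hF2
    have hge2 := hr p.castSucc.castSucc
    have heq2 : dgn X (c p.castSucc.castSucc) = r := by omega
    have hle2 := hmmin _ heq2
    rw [Fin.le_def] at hle2
    have hval : (p.castSucc.castSucc : ℕ) = (p : ℕ) := rfl
    omega

end AufhebungSSet
end

section
/- Let X be a simplicial set and let c be a k-sphere in X (k ≥ 1) with all faces c_0, …, c_k degenerate. Let r be the minimal value of dgn(c_i) over 0 ≤ i ≤ k and let m be the smallest ordinal with dgn(c_m) = r. Then there are at least r+2 ordinals u with 0 ≤ u ≤ k such that dgn(c_u) = r and c_u = c_m σ_m δ_u. -/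
open CategoryTheory Simplicial

namespace AufhebungSSet

namespace Tech

open SimplexCategory

/-- The set of dimensions `k` such that `x` is the image of some `k`-simplex
under the action of an epimorphism of `Δ`. -/
def ESet (X : SSet) {n : ℕ} (x : X _⦋n⦌) : Set ℕ :=
  setOf fun k : ℕ => ∃ ε : (⦋n⦌ : SimplexCategory) ⟶ ⦋k⦌,
    Function.Surjective ε.toOrderHom ∧ ∃ y : X _⦋k⦌, x = X.map ε.op y

lemma dgn_eq (X : SSet) {n : ℕ} (x : X _⦋n⦌) : dgn X x = n - sInf (ESet X x) := rfl

lemma self_mem (X : SSet) {n : ℕ} (x : X _⦋n⦌) : n ∈ ESet X x := by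
  refine ⟨𝟙 _, ?_, x, by simp⟩
  rw [SimplexCategory.id_toOrderHom]
  exact fun a => ⟨a, rfl⟩

lemma sInf_le_dim (X : SSet) {n : ℕ} (x : X _⦋n⦌) : sInf (ESet X x) ≤ n :=
  Nat.sInf_le (self_mem X x)

lemma mem_ESet_trans (X : SSet) {n k l : ℕ} {x : X _⦋n⦌} {ε : (⦋n⦌ : SimplexCategory) ⟶ ⦋k⦌}
    (hε : Function.Surjective ε.toOrderHom) {y : X _⦋k⦌} (hxy : x = X.map ε.op y)
    (hl : l ∈ ESet X y) : l ∈ ESet X x := by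
  obtain ⟨φ, hφ, z, hz⟩ := hl
  refine ⟨ε ≫ φ, ?_, z, ?_⟩
  · rw [SimplexCategory.comp_toOrderHom, OrderHom.comp_coe]
    exact Function.Surjective.comp hφ hε
  · rw [hxy, hz, op_comp, FunctorToTypes.map_comp_apply]

lemma exists_min (X : SSet) {n : ℕ} (x : X _⦋n⦌) :
    ∃ ε : (⦋n⦌ : SimplexCategory) ⟶ ⦋sInf (ESet X x)⦌,
      Function.Surjective ε.toOrderHom ∧ ∃ y : X _⦋sInf (ESet X x)⦌,
        x = X.map ε.op y ∧ sInf (ESet X y) = sInf (ESet X x) := by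
  obtain ⟨ε, hε, y, hy⟩ := Nat.sInf_mem (⟨n, self_mem X x⟩ : (ESet X x).Nonempty)
  refine ⟨ε, hε, y, hy, le_antisymm (sInf_le_dim X y) ?_⟩
  exact le_csInf ⟨_, self_mem X y⟩ fun l hl => Nat.sInf_le (mem_ESet_trans X hε hy hl)

lemma surj_to_zero {a : ℕ} (f : (⦋a⦌ : SimplexCategory) ⟶ ⦋0⦌) :
    Function.Surjective f.toOrderHom := by
  intro y
  refine ⟨0, Fin.ext ?_⟩
  have h1 : ((f.toOrderHom 0 : Fin (⦋0⦌.len + 1)) : ℕ) < 1 := (f.toOrderHom 0).isLt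
  have h2 : ((y : Fin (⦋0⦌.len + 1)) : ℕ) < 1 := y.isLt
  omega

lemma exists_factor : ∀ (b a : ℕ) (f : (⦋a⦌ : SimplexCategory) ⟶ ⦋b⦌),
    ∃ (s : ℕ) (e : (⦋a⦌ : SimplexCategory) ⟶ ⦋s⦌) (g : (⦋s⦌ : SimplexCategory) ⟶ ⦋b⦌),
      s ≤ b ∧ Function.Surjective e.toOrderHom ∧ f = e ≫ g ∧
      (¬ Function.Surjective f.toOrderHom → s < b) := by
  intro b
  induction b with
  | zero =>
    intro a f
    exact ⟨0, f, 𝟙 _, le_rfl, surj_to_zero f,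
      (Category.comp_id f).symm, fun h => absurd (surj_to_zero f) h⟩
  | succ b ih =>
    intro a f
    by_cases hs : Function.Surjective f.toOrderHom
    · exact ⟨b + 1, f, 𝟙 _, le_rfl, hs, (Category.comp_id f).symm, fun h => absurd hs h⟩
    · obtain ⟨i, θ', hθ⟩ := SimplexCategory.eq_comp_δ_of_not_surjective f hs
      obtain ⟨s, e, g, hsb, he, hfac, -⟩ := ih a θ'
      exact ⟨s, e, g ≫ δ i, by omega, he,
        by rw [hθ, hfac, Category.assoc], fun _ => by omega⟩

lemma exists_section {a b : ℕ} (f : (⦋a⦌ : SimplexCategory) ⟶ ⦋b⦌)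
    (hf : Function.Surjective f.toOrderHom) :
    ∃ ι : (⦋b⦌ : SimplexCategory) ⟶ ⦋a⦌, ι ≫ f = 𝟙 _ := by
  haveI : Epi f := SimplexCategory.epi_iff_surjective.2 hf
  haveI := isSplitEpi_of_epi f
  exact ⟨section_ f, IsSplitEpi.id f⟩

lemma sInf_ESet_map (X : SSet) {d N : ℕ} (z : X _⦋d⦌) (hz : sInf (ESet X z) = d)
    (ε : (⦋N⦌ : SimplexCategory) ⟶ ⦋d⦌) (hε : Function.Surjective ε.toOrderHom) :
    sInf (ESet X (X.map ε.op z)) = d := by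
  apply le_antisymm
  · exact Nat.sInf_le ⟨ε, hε, z, rfl⟩
  · apply le_csInf ⟨_, self_mem X _⟩
    rintro l ⟨φ, hφ, w, hw⟩
    obtain ⟨ι, hι⟩ := exists_section ε hε
    have hz' : z = X.map (ι ≫ φ).op w := by
      have h1 : z = X.map ι.op (X.map ε.op z) := by
        rw [← FunctorToTypes.map_comp_apply, ← op_comp, hι, op_id, FunctorToTypes.map_id_apply]
      rw [h1, hw, ← FunctorToTypes.map_comp_apply, ← op_comp]
    obtain ⟨s, e, g, hsl, he, hfac, -⟩ := exists_factor l d (ι ≫ φ)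
    have h2 : sInf (ESet X z) ≤ s := by
      refine Nat.sInf_le ⟨e, he, X.map g.op w, ?_⟩
      rw [hz', hfac, op_comp, FunctorToTypes.map_comp_apply]
    omega

lemma face_of_decomp (X : SSet) {n l : ℕ} {x : X _⦋n + 1⦌}
    {β : (⦋n + 1⦌ : SimplexCategory) ⟶ ⦋l⦌} {v : X _⦋l⦌} (hx : x = X.map β.op v)
    (i : Fin (n + 2)) :
    X.map (SimplexCategory.δ i).op x = X.map (SimplexCategory.δ i ≫ β).op v := by
  conv_lhs => rw [hx, ← FunctorToTypes.map_comp_apply, ← op_comp]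

lemma sInf_face_le (X : SSet) {n : ℕ} (x : X _⦋n + 1⦌) (i : Fin (n + 2)) :
    sInf (ESet X (X.map (δ i).op x)) ≤ sInf (ESet X x) := by
  obtain ⟨ε, hε, y, hy, -⟩ := exists_min X x
  obtain ⟨s, e, g, hs, he, hfac, -⟩ := exists_factor (sInf (ESet X x)) n (δ i ≫ ε)
  have h1 : X.map (δ i).op x = X.map e.op (X.map g.op y) := by
    rw [face_of_decomp X hy i, hfac, op_comp, FunctorToTypes.map_comp_apply]
  exact le_trans (Nat.sInf_le ⟨e, he, _, h1⟩) hs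

lemma dgn_le_face (X : SSet) {n : ℕ} (x : X _⦋n + 1⦌) (i : Fin (n + 2)) :
    dgn X x ≤ dgn X (X.map (δ i).op x) + 1 := by
  have h1 := sInf_face_le X x i
  have h2 := sInf_le_dim X (X.map (δ i).op x)
  rw [dgn_eq, dgn_eq]
  omega

lemma succAbove_predAbove_succ {n : ℕ} (q : Fin (n + 1)) (j : Fin (n + 2)) (h : j ≠ q.succ) :
    q.succ.succAbove (q.predAbove j) = j := by
  rcases Fin.lt_or_lt_of_ne h with h1 | h1
  · have h2 : j ≤ q.castSucc := by
      rw [Fin.le_def]; rw [Fin.lt_def] at h1; simp at h1 ⊢; omega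
    rw [Fin.predAbove_of_le_castSucc _ _ h2,
      Fin.succAbove_succ_of_le _ _ (by rw [Fin.le_def]; rw [Fin.le_def] at h2; simpa using h2),
      Fin.castSucc_castPred]
  · rw [Fin.predAbove_of_castSucc_lt _ _ (by rw [Fin.lt_def] at h1 ⊢; simp at h1 ⊢; omega),
      Fin.succAbove_succ_of_lt _ _ (by rw [Fin.lt_def] at h1 ⊢; simp at h1 ⊢; omega),
      Fin.succ_pred]

lemma collapse_castSucc {n l : ℕ} (β : (⦋n + 1⦌ : SimplexCategory) ⟶ ⦋l⦌) (q : Fin (n + 1))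
    (hq : β.toOrderHom q.castSucc = β.toOrderHom q.succ) :
    σ q ≫ δ q.castSucc ≫ β = β := by
  apply SimplexCategory.Hom.ext
  apply OrderHom.ext
  funext j
  simp only [SimplexCategory.comp_toOrderHom, OrderHom.comp_coe, Function.comp_apply]
  show β.toOrderHom (q.castSucc.succAbove (q.predAbove j)) = β.toOrderHom j
  by_cases h : j = q.castSucc
  · subst h
    rw [Fin.predAbove_castSucc_self, Fin.succAbove_castSucc_self, ← hq]
  · rw [Fin.succAbove_predAbove h]

lemma collapse_succ {n l : ℕ} (β : (⦋n + 1⦌ : SimplexCategory) ⟶ ⦋l⦌) (q : Fin (n + 1))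
    (hq : β.toOrderHom q.castSucc = β.toOrderHom q.succ) :
    σ q ≫ δ q.succ ≫ β = β := by
  apply SimplexCategory.Hom.ext
  apply OrderHom.ext
  funext j
  simp only [SimplexCategory.comp_toOrderHom, OrderHom.comp_coe, Function.comp_apply]
  show β.toOrderHom (q.succ.succAbove (q.predAbove j)) = β.toOrderHom j
  by_cases h : j = q.succ
  · subst h
    rw [Fin.predAbove_succ_self, Fin.succAbove_succ_self, hq]
  · rw [succAbove_predAbove_succ q j h]

lemma collapse_surj {n l : ℕ} (β : (⦋n + 1⦌ : SimplexCategory) ⟶ ⦋l⦌) (q : Fin (n + 1))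
    (hβ : Function.Surjective β.toOrderHom) {i : Fin (n + 2)}
    (h : σ q ≫ δ i ≫ β = β) :
    Function.Surjective (δ i ≫ β).toOrderHom := by
  intro y
  obtain ⟨j, hj⟩ := hβ y
  refine ⟨(σ q).toOrderHom j, ?_⟩
  have h2 := congrArg (fun f => SimplexCategory.Hom.toOrderHom f j) h
  simp only [SimplexCategory.comp_toOrderHom, OrderHom.comp_coe, Function.comp_apply] at h2 ⊢
  exact h2.trans hj

lemma prop_degen (X : SSet) {n l : ℕ} {x : X _⦋n + 1⦌}
    {β : (⦋n + 1⦌ : SimplexCategory) ⟶ ⦋l⦌} {v : X _⦋l⦌} (hx : x = X.map β.op v)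
    (q : Fin (n + 1)) (hq : β.toOrderHom q.castSucc = β.toOrderHom q.succ) :
    x = X.map (σ q).op (X.map (δ q.castSucc).op x) := by
  conv_rhs => rw [hx, ← FunctorToTypes.map_comp_apply, ← op_comp,
    ← FunctorToTypes.map_comp_apply, ← op_comp]
  conv_lhs => rw [hx, ← collapse_castSucc β q hq]
  rw [Category.assoc]

lemma card_collapse {n l : ℕ} (β : (⦋n + 1⦌ : SimplexCategory) ⟶ ⦋l⦌)
    (hβ : Function.Surjective β.toOrderHom) :
    n + 1 - l ≤ (Finset.univ.filter
      (fun q : Fin (n + 1) => β.toOrderHom q.castSucc = β.toOrderHom q.succ)).card := by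
  have hsplit := Finset.card_filter_add_card_filter_not
    (s := (Finset.univ : Finset (Fin (n + 1))))
    (p := fun q => β.toOrderHom q.castSucc = β.toOrderHom q.succ)
  rw [Finset.card_univ, Fintype.card_fin] at hsplit
  rcases Nat.eq_zero_or_pos l with hl | hl
  · subst hl
    have hall : ∀ q : Fin (n + 1), β.toOrderHom q.castSucc = β.toOrderHom q.succ := by
      intro q
      apply Fin.ext
      have h1 : ((β.toOrderHom q.castSucc : Fin ((⦋0⦌ : SimplexCategory).len + 1)) : ℕ) < 1 :=
        (β.toOrderHom q.castSucc).isLt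
      have h2 : ((β.toOrderHom q.succ : Fin ((⦋0⦌ : SimplexCategory).len + 1)) : ℕ) < 1 :=
        (β.toOrderHom q.succ).isLt
      omega
    have heq : (Finset.univ.filter
        (fun q : Fin (n + 1) => β.toOrderHom q.castSucc = β.toOrderHom q.succ)) = Finset.univ :=
      Finset.filter_eq_self.mpr (fun q _ => hall q)
    rw [heq, Finset.card_univ, Fintype.card_fin]
    omega
  · have hJ : (Finset.univ.filter
        (fun q : Fin (n + 1) => ¬ β.toOrderHom q.castSucc = β.toOrderHom q.succ)).card ≤ l := by
      have := Finset.card_le_card_of_injOn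
        (f := fun q : Fin (n + 1) => (⟨(β.toOrderHom q.succ : ℕ) - 1, by
          have := (β.toOrderHom q.succ).isLt
          have hll : (⦋l⦌ : SimplexCategory).len = l := rfl
          omega⟩ : Fin l))
        (s := Finset.univ.filter
          (fun q : Fin (n + 1) => ¬ β.toOrderHom q.castSucc = β.toOrderHom q.succ))
        (t := Finset.univ) (fun q _ => Finset.mem_univ _) ?_
      · simpa using this
      · intro a ha b hb hab
        simp only [Finset.mem_coe, Finset.mem_filter, Finset.mem_univ, true_and] at ha hb
        have hmono := β.toOrderHom.monotone
        have h1 : (β.toOrderHom a.castSucc : ℕ) < (β.toOrderHom a.succ : ℕ) := by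
          have hle : (β.toOrderHom a.castSucc : ℕ) ≤ (β.toOrderHom a.succ : ℕ) :=
            hmono (by rw [Fin.le_def]; simp)
          have : ¬ ((β.toOrderHom a.castSucc : ℕ) = (β.toOrderHom a.succ : ℕ)) := by
            intro hh; exact ha (Fin.ext hh)
          omega
        have h2 : (β.toOrderHom b.castSucc : ℕ) < (β.toOrderHom b.succ : ℕ) := by
          have hle : (β.toOrderHom b.castSucc : ℕ) ≤ (β.toOrderHom b.succ : ℕ) :=
            hmono (by rw [Fin.le_def]; simp)
          have : ¬ ((β.toOrderHom b.castSucc : ℕ) = (β.toOrderHom b.succ : ℕ)) := by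
            intro hh; exact hb (Fin.ext hh)
          omega
        have hval : (β.toOrderHom a.succ : ℕ) = (β.toOrderHom b.succ : ℕ) := by
          have := congrArg Fin.val hab
          simp at this
          omega
        by_contra hne
        rcases Nat.lt_or_ge (a : ℕ) (b : ℕ) with hlt | hge
        · have : (β.toOrderHom a.succ : ℕ) ≤ (β.toOrderHom b.castSucc : ℕ) :=
            hmono (by rw [Fin.le_def]; simp <;> omega)
          omega
        · have hlt : (b : ℕ) < (a : ℕ) := by
            rcases Nat.lt_or_ge (b : ℕ) (a : ℕ) with h | h
            · exact h
            · exact absurd (Fin.ext (by omega : (a : ℕ) = (b : ℕ))) hne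
          have : (β.toOrderHom b.succ : ℕ) ≤ (β.toOrderHom a.castSucc : ℕ) :=
            hmono (by rw [Fin.le_def]; simp <;> omega)
          omega
    omega

end Tech

/-- If all faces of a sphere `c` are degenerate, `r` is the minimal degeneracy, and
`m` is the first face of degeneracy `r`, then at least `r + 2` faces `c_u` satisfy
`dgn (c_u) = r` and `c_u = c_m σ_m δ_u`. -/
theorem techlem2 (X : SSet) (K : ℕ) (c : Fin (K + 3) → X _⦋K + 1⦌) (hc : IsSphere X c)
    (r : ℕ) (hr : ∀ u : Fin (K + 3), r ≤ dgn X (c u))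
    (m : Fin (K + 3)) (hm : dgn X (c m) = r)
    (hmmin : ∀ u : Fin (K + 3), dgn X (c u) = r → m ≤ u)
    (hdeg : ∀ u : Fin (K + 3), IsDegen X (c u)) :
    ∃ h : (m : ℕ) < K + 2,
      r + 2 ≤ Set.ncard (setOf fun u : Fin (K + 3) => dgn X (c u) = r ∧
        c u = X.map (SimplexCategory.δ u).op
          (X.map (SimplexCategory.σ ⟨(m : ℕ), h⟩).op (c m))) := by
  classical
  have hk₀n : sInf (Tech.ESet X (c m)) ≤ K + 1 := Tech.sInf_le_dim X (c m)
  have hmr : K + 1 - sInf (Tech.ESet X (c m)) = r := by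
    rw [← Tech.dgn_eq]; exact hm
  have hr1 : 1 ≤ r := by
    obtain ⟨d, hd, ε', hε', y, hy⟩ := hdeg m
    have h1 : sInf (Tech.ESet X (c m)) ≤ d := Nat.sInf_le ⟨ε', hε', y, hy⟩
    omega
  obtain ⟨ε, hε, z, hz, hznd⟩ := Tech.exists_min X (c m)
  set S : Finset (Fin (K + 1)) :=
    Finset.univ.filter (fun q => ε.toOrderHom q.castSucc = ε.toOrderHom q.succ) with hSdef
  have hScard : r ≤ S.card := by
    have h1 := Tech.card_collapse ε hε
    rw [← hSdef] at h1
    omega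
  -- faces below m have degeneracy at least r
  have lowface : ∀ (i j : Fin (K + 2)), i ≤ j → (i : ℕ) < (m : ℕ) →
      r ≤ dgn X (X.map (SimplexCategory.δ i).op (c j.succ)) := by
    intro i j hij him
    rw [hc i j hij]
    have hge : r + 1 ≤ dgn X (c i.castSucc) := by
      have h1 := hr i.castSucc
      rcases Nat.lt_or_ge r (dgn X (c i.castSucc)) with h | h
      · omega
      · exfalso
        have h2 : dgn X (c i.castSucc) = r := by omega
        have h3 := hmmin _ h2
        rw [Fin.le_def] at h3
        simp at h3
        omega
    have h4 := Tech.dgn_le_face X (c i.castSucc) j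
    omega
  -- faces of c m along surjective composites have minimal sInf
  have hface : ∀ p : Fin (K + 2), Function.Surjective (SimplexCategory.δ p ≫ ε).toOrderHom →
      sInf (Tech.ESet X (X.map (SimplexCategory.δ p).op (c m))) = sInf (Tech.ESet X (c m)) := by
    intro p hp
    rw [Tech.face_of_decomp X hz p]
    exact Tech.sInf_ESet_map X z hznd _ hp
  -- every collapse point of ε is ≥ m
  have hmS : ∀ q ∈ S, (m : ℕ) ≤ (q : ℕ) := by
    intro q hq
    have hcol : ε.toOrderHom q.castSucc = ε.toOrderHom q.succ := by
      rw [hSdef] at hq; simpa using hq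
    by_contra hlt
    push_neg at hlt
    have hsurj := Tech.collapse_surj ε q hε (Tech.collapse_castSucc ε q hcol)
    have hval := hface q.castSucc hsurj
    have hj2 : ((⟨(m : ℕ) - 1, by have := m.isLt; omega⟩ : Fin (K + 2)).succ) = m := by
      apply Fin.ext; simp <;> omega
    have hlow := lowface q.castSucc ⟨(m : ℕ) - 1, by have := m.isLt; omega⟩
      (by rw [Fin.le_def]; simp <;> omega) (by simp <;> omega)
    rw [hj2] at hlow
    rw [Tech.dgn_eq, hval] at hlow
    omega
  have hSne : S.Nonempty := Finset.card_pos.mp (by omega)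
  have hmK : (m : ℕ) ≤ K := by
    obtain ⟨q₀, hq₀⟩ := hSne
    have h1 := hmS q₀ hq₀
    have h2 := q₀.isLt
    omega
  have hmlt : (m : ℕ) < K + 2 := by omega
  set qm : Fin (K + 1) := ⟨(m : ℕ), by omega⟩ with hqmdef
  have hqmval : ((qm : Fin (K + 1)) : ℕ) = (m : ℕ) := by rw [hqmdef]
  -- the key sub-lemma
  have subC : ∀ p : Fin (K + 2), (m : ℕ) ≤ (p : ℕ) →
      sInf (Tech.ESet X (X.map (SimplexCategory.δ p).op (c m))) = sInf (Tech.ESet X (c m)) →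
      dgn X (c p.succ) = r ∧
        c p.succ = X.map (SimplexCategory.σ qm).op
          (X.map (SimplexCategory.δ p).op (c m)) := by
    intro p hmp hpv
    have hmcs : (qm.castSucc : Fin (K + 2)) ≤ p := by
      rw [Fin.le_def]; simp [hqmval] <;> omega
    have hfaceu : X.map (SimplexCategory.δ qm.castSucc).op (c p.succ)
        = X.map (SimplexCategory.δ p).op (c m) := by
      have h1 := hc qm.castSucc p hmcs
      rw [h1]
      congr 1
    have hdgnu : dgn X (c p.succ) = r := by
      have h1 := Tech.dgn_le_face X (c p.succ) qm.castSucc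
      rw [hfaceu] at h1
      rw [Tech.dgn_eq, Tech.dgn_eq, hpv] at h1
      have h2 := hr p.succ
      rw [Tech.dgn_eq] at h2 ⊢
      omega
    obtain ⟨β, hβ, v, hv, hvnd⟩ := Tech.exists_min X (c p.succ)
    have hlval : sInf (Tech.ESet X (c p.succ)) = sInf (Tech.ESet X (c m)) := by
      rw [Tech.dgn_eq] at hdgnu
      have := Tech.sInf_le_dim X (c p.succ)
      omega
    have hTface : ∀ q : Fin (K + 1), β.toOrderHom q.castSucc = β.toOrderHom q.succ →
        sInf (Tech.ESet X (X.map (SimplexCategory.δ q.castSucc).op (c p.succ)))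
          = sInf (Tech.ESet X (c p.succ)) := by
      intro q hq
      have hsurj := Tech.collapse_surj β q hβ (Tech.collapse_castSucc β q hq)
      rw [Tech.face_of_decomp X hv q.castSucc]
      exact Tech.sInf_ESet_map X v hvnd _ hsurj
    have hT : ∀ q : Fin (K + 1), β.toOrderHom q.castSucc = β.toOrderHom q.succ →
        (m : ℕ) ≤ (q : ℕ) := by
      intro q hq
      by_contra hlt
      push_neg at hlt
      have hlow := lowface q.castSucc p
        (by rw [Fin.le_def]; simp [hqmval] <;> omega) (by simp [hqmval] <;> omega)
      rw [Tech.dgn_eq, hTface q hq, hlval] at hlow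
      omega
    have hmT : β.toOrderHom qm.castSucc = β.toOrderHom qm.succ := by
      by_contra hne
      have hns : ¬ Function.Surjective (SimplexCategory.δ qm.castSucc ≫ β).toOrderHom := by
        intro hsurj
        obtain ⟨a, ha⟩ := hsurj (β.toOrderHom qm.castSucc)
        rw [SimplexCategory.comp_toOrderHom] at ha
        simp only [OrderHom.comp_coe, Function.comp_apply] at ha
        have ha' : β.toOrderHom ((qm.castSucc).succAbove a) = β.toOrderHom qm.castSucc := ha
        rcases Nat.lt_or_ge (a : ℕ) (m : ℕ) with hc1 | hc1
        · have hsa : ((qm.castSucc).succAbove a) = a.castSucc := by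
            apply Fin.succAbove_of_castSucc_lt
            rw [Fin.lt_def]; simp [hqmval] <;> omega
          rw [hsa] at ha'
          have hq' : β.toOrderHom (⟨(m : ℕ) - 1, by omega⟩ : Fin (K + 1)).castSucc
              = β.toOrderHom (⟨(m : ℕ) - 1, by omega⟩ : Fin (K + 1)).succ := by
            have hmono := β.toOrderHom.monotone
            have e1 : ((⟨(m : ℕ) - 1, by omega⟩ : Fin (K + 1)).succ : Fin (K + 2))
                = qm.castSucc := by
              apply Fin.ext; simp [hqmval] <;> omega
            rw [e1]
            apply le_antisymm
            · exact hmono (by rw [Fin.le_def]; simp [hqmval] <;> omega)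
            · rw [← ha']
              exact hmono (by rw [Fin.le_def]; simp [hqmval] <;> omega)
          have h5 := hT _ hq'
          simp at h5
          omega
        · have hsa : ((qm.castSucc).succAbove a) = a.succ := by
            apply Fin.succAbove_of_le_castSucc
            rw [Fin.le_def]; simp [hqmval] <;> omega
          rw [hsa] at ha'
          apply hne
          have hmono := β.toOrderHom.monotone
          apply le_antisymm
          · exact hmono (by rw [Fin.le_def]; simp)
          · rw [← ha']
            exact hmono (by rw [Fin.le_def]; simp [hqmval] <;> omega)
      obtain ⟨s, e, g, hsl, hesurj, hfac, hstrict⟩ :=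
        Tech.exists_factor _ K (SimplexCategory.δ qm.castSucc ≫ β)
      have hs := hstrict hns
      have h1 : X.map (SimplexCategory.δ qm.castSucc).op (c p.succ)
          = X.map e.op (X.map g.op v) := by
        rw [Tech.face_of_decomp X hv qm.castSucc, hfac, op_comp, FunctorToTypes.map_comp_apply]
      have h2 : sInf (Tech.ESet X (X.map (SimplexCategory.δ qm.castSucc).op (c p.succ))) ≤ s :=
        Nat.sInf_le ⟨e, hesurj, _, h1⟩
      rw [hfaceu, hpv] at h2
      omega
    have hcu := Tech.prop_degen X hv qm hmT
    rw [hfaceu] at hcu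
    exact ⟨hdgnu, hcu⟩
  -- assemble the final set
  refine ⟨hmlt, ?_⟩
  have hieq : (⟨(m : ℕ), hmlt⟩ : Fin (K + 2)) = qm.castSucc := by
    apply Fin.ext; simp [hqmval]
  have hmapcomp : ∀ (u : Fin (K + 3)) (i : Fin (K + 2)) (x : X _⦋K + 1⦌),
      X.map (SimplexCategory.δ u).op (X.map (SimplexCategory.σ i).op x)
        = X.map (SimplexCategory.δ u ≫ SimplexCategory.σ i).op x := by
    intro u i x
    rw [op_comp, FunctorToTypes.map_comp_apply]
  set A := setOf fun u : Fin (K + 3) => dgn X (c u) = r ∧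
      c u = X.map (SimplexCategory.δ u).op
        (X.map (SimplexCategory.σ ⟨(m : ℕ), hmlt⟩).op (c m)) with hAdef
  -- membership of m
  have hmem_m : m ∈ A := by
    refine ⟨hm, ?_⟩
    rw [hmapcomp, SimplexCategory.δ_comp_σ_self' (by apply Fin.ext; simp [hqmval]), op_id,
      FunctorToTypes.map_id_apply]
  -- membership of successors of collapse points
  have hmem_q : ∀ q ∈ S, (q.castSucc.succ : Fin (K + 3)) ∈ A := by
    intro q hq
    have hcol : ε.toOrderHom q.castSucc = ε.toOrderHom q.succ := by
      rw [hSdef] at hq; simpa using hq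
    have hmq := hmS q hq
    have hsurj := Tech.collapse_surj ε q hε (Tech.collapse_castSucc ε q hcol)
    have hpv := hface q.castSucc hsurj
    obtain ⟨hdgnu, hcu⟩ := subC q.castSucc (by simpa using hmq) hpv
    refine ⟨hdgnu, ?_⟩
    rcases Nat.lt_or_ge (m : ℕ) (q : ℕ) with hlt | hge
    · -- q > m : use δ_comp_σ_of_gt
      rw [hmapcomp, hieq, SimplexCategory.δ_comp_σ_of_gt (by rw [Fin.lt_def]; simp [hqmval] <;> omega),
        op_comp, FunctorToTypes.map_comp_apply]
      exact hcu
    · -- q = m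
      have hqm : q = qm := by apply Fin.ext; simp [hqmval] <;> omega
      subst hqm
      rw [hmapcomp, SimplexCategory.δ_comp_σ_succ' (by apply Fin.ext; simp [hqmval]), op_id,
        FunctorToTypes.map_id_apply]
      rw [hcu]
      exact (Tech.prop_degen X hz qm hcol).symm
  -- membership of the successor of the top collapse point
  have hmem_top : ((S.max' hSne).succ.succ : Fin (K + 3)) ∈ A := by
    set qx := S.max' hSne with hqxdef
    have hqx : qx ∈ S := S.max'_mem hSne
    have hcol : ε.toOrderHom qx.castSucc = ε.toOrderHom qx.succ := by
      rw [hSdef] at hqx; simpa using hqx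
    have hmq := hmS qx hqx
    have hsurj := Tech.collapse_surj ε qx hε (Tech.collapse_succ ε qx hcol)
    have hpv := hface qx.succ hsurj
    obtain ⟨hdgnu, hcu⟩ := subC qx.succ (by simp [hqmval] <;> omega) hpv
    refine ⟨hdgnu, ?_⟩
    rw [hmapcomp, hieq, SimplexCategory.δ_comp_σ_of_gt (by rw [Fin.lt_def]; simp [hqmval] <;> omega),
      op_comp, FunctorToTypes.map_comp_apply]
    exact hcu
  -- the finite set of good indices
  set F : Finset (Fin (K + 3)) :=
    insert m (insert ((S.max' hSne).succ.succ)
      (S.image (fun q => (q.castSucc.succ : Fin (K + 3))))) with hFdef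
  have hsub : ↑F ⊆ A := by
    intro u hu
    rw [Finset.mem_coe, hFdef, Finset.mem_insert, Finset.mem_insert] at hu
    rcases hu with rfl | rfl | hu
    · exact hmem_m
    · exact hmem_top
    · obtain ⟨q, hq, rfl⟩ := Finset.mem_image.mp hu
      exact hmem_q q hq
  have hcard : r + 2 ≤ F.card := by
    have hinj : Function.Injective (fun q : Fin (K + 1) => (q.castSucc.succ : Fin (K + 3))) := by
      intro a b hab
      apply Fin.ext
      have := congrArg Fin.val hab
      simpa using this
    have himg : (S.image (fun q => (q.castSucc.succ : Fin (K + 3)))).card = S.card :=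
      Finset.card_image_of_injective S hinj
    have hnot1 : ((S.max' hSne).succ.succ : Fin (K + 3)) ∉
        S.image (fun q => (q.castSucc.succ : Fin (K + 3))) := by
      intro hmem
      obtain ⟨q, hq, heq⟩ := Finset.mem_image.mp hmem
      have h1 := Finset.le_max' S q hq
      rw [Fin.le_def] at h1
      have := congrArg Fin.val heq
      simp at this
      omega
    have hnot2 : m ∉ insert ((S.max' hSne).succ.succ)
        (S.image (fun q => (q.castSucc.succ : Fin (K + 3)))) := by
      intro hmem
      rw [Finset.mem_insert] at hmem
      rcases hmem with heq | hmem
      · have h1 := hmS _ (S.max'_mem hSne)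
        have := congrArg Fin.val heq
        simp at this
        omega
      · obtain ⟨q, hq, heq⟩ := Finset.mem_image.mp hmem
        have h1 := hmS q hq
        have := congrArg Fin.val heq
        simp at this
        omega
    rw [hFdef, Finset.card_insert_of_notMem hnot2, Finset.card_insert_of_notMem hnot1, himg]
    omega
  calc r + 2 ≤ F.card := hcard
    _ = (↑F : Set (Fin (K + 3))).ncard := (Set.ncard_coe_finset F).symm
    _ ≤ A.ncard := Set.ncard_le_ncard hsub (Set.toFinite A)

end AufhebungSSet
end

section
/- Every 0-skeletal simplicial set is 1-coskeletal, and every 1-skeletal simplicial set is 2-coskeletal. That is, if every k-simplex of X with k > 0 (respectively k > 1) is degenerate, then every k-sphere in X with k > 1 (respectively k > 2) has a unique filler. -/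
open CategoryTheory Simplicial

namespace AufhebungSSet

open SimplexCategory

variable {X : SSet}

/-- simplex action -/
def ac {m n : ℕ} (x : X _⦋n⦌) (f : (⦋m⦌ : SimplexCategory) ⟶ ⦋n⦌) : X _⦋m⦌ :=
  X.map f.op x

lemma ac_ac {m n p : ℕ} (x : X _⦋n⦌) (f : (⦋m⦌ : SimplexCategory) ⟶ ⦋n⦌)
    (g : (⦋p⦌ : SimplexCategory) ⟶ ⦋m⦌) : ac (ac x f) g = ac x (g ≫ f) := by
  simp only [ac]
  rw [op_comp, FunctorToTypes.map_comp_apply]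

lemma ac_id {n : ℕ} (x : X _⦋n⦌) : ac x (𝟙 _) = x := by
  simp only [ac]
  rw [op_id, FunctorToTypes.map_id_apply]

/-- terminal map -/
abbrev tz (n : ℕ) : (⦋n⦌ : SimplexCategory) ⟶ ⦋0⦌ := const _ _ 0

/-- vertex map -/
abbrev pt {n : ℕ} (i : Fin (n + 1)) : (⦋0⦌ : SimplexCategory) ⟶ ⦋n⦌ := const _ _ i

lemma comp_tz {m n : ℕ} (f : (⦋m⦌ : SimplexCategory) ⟶ ⦋n⦌) : f ≫ tz n = tz m :=
  eq_const_to_zero _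

lemma pt_tz {n : ℕ} (i : Fin (n + 1)) : pt i ≫ tz n = 𝟙 (⦋0⦌ : SimplexCategory) :=
  (comp_tz _).trans const_eq_id

lemma const_vert {n : ℕ} {x : X _⦋n⦌} {v : X _⦋0⦌} (h : x = ac v (tz n)) (s : Fin (n + 1)) :
    ac x (pt s) = v := by
  subst h
  rw [ac_ac, pt_tz, ac_id]

lemma ac_const {m n : ℕ} (x : X _⦋n⦌) (i : Fin (n + 1)) :
    ac x (const ⦋m⦌ ⦋n⦌ i) = ac (ac x (pt i)) (tz m) := by
  rw [const_fac_thru_zero]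
  exact (ac_ac _ _ _).symm

def jmp {n : ℕ} (j : Fin (n + 1)) : (⦋n⦌ : SimplexCategory) ⟶ ⦋1⦌ :=
  mkHom ⟨fun t => if t ≤ j then 0 else 1, fun a b hab => by
    dsimp only
    by_cases hb : b ≤ j
    · rw [if_pos hb, if_pos (le_trans hab hb)]
    · rw [if_neg hb]
      exact Fin.le_last _⟩

lemma jmp_app {n : ℕ} (j t : Fin (n + 1)) :
    (jmp j).toOrderHom t = if t ≤ j then 0 else 1 := rfl

lemma hom_ext' {a b : SimplexCategory} (f g : a ⟶ b)
    (h : ∀ t, f.toOrderHom t = g.toOrderHom t) : f = g :=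
  Hom.ext _ _ (OrderHom.ext _ _ (funext h))

lemma jmp_last {n : ℕ} : jmp (Fin.last n) = const ⦋n⦌ ⦋1⦌ 0 :=
  hom_ext' _ _ fun t => by
    show (if t ≤ Fin.last n then (0 : Fin 2) else 1) = 0
    rw [if_pos (show t ≤ Fin.last n from Fin.le_last (n := ⦋n⦌.len) t)]

lemma fin2_eq_one {x : Fin 2} (h : x ≠ 0) : x = 1 := by
  fin_cases x
  · exact absurd rfl h
  · rfl

lemma one_eq_mkOfLe {n : ℕ} (g : (⦋1⦌ : SimplexCategory) ⟶ ⦋n⦌) :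
    ∃ (a b : Fin (n + 1)) (h : a ≤ b), g = mkOfLe a b h :=
  ⟨_, _, g.toOrderHom.monotone (by decide : (0 : Fin 2) ≤ 1),
    Hom.ext_one_left _ _ rfl rfl⟩

lemma mkOfLe_jmp_low {n : ℕ} {a b : Fin (n + 1)} (hab : a ≤ b) (j : Fin (n + 1)) (h : b ≤ j) :
    mkOfLe a b hab ≫ jmp j = const ⦋1⦌ ⦋1⦌ 0 :=
  Hom.ext_one_left _ _
    (by show (if a ≤ j then (0 : Fin 2) else 1) = 0; rw [if_pos (le_trans hab h)])
    (by show (if b ≤ j then (0 : Fin 2) else 1) = 0; rw [if_pos h])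

lemma mkOfLe_jmp_cross {n : ℕ} {a b : Fin (n + 1)} (hab : a ≤ b) (j : Fin (n + 1))
    (h1 : a ≤ j) (h2 : j < b) : mkOfLe a b hab ≫ jmp j = 𝟙 (⦋1⦌ : SimplexCategory) :=
  Hom.ext_one_left _ _
    (by show (if a ≤ j then (0 : Fin 2) else 1) = 0; rw [if_pos h1])
    (by show (if b ≤ j then (0 : Fin 2) else 1) = 1; rw [if_neg (not_le.mpr h2)])

lemma mkOfLe_jmp_high {n : ℕ} {a b : Fin (n + 1)} (hab : a ≤ b) (j : Fin (n + 1))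
    (h : j < a) : mkOfLe a b hab ≫ jmp j = const ⦋1⦌ ⦋1⦌ 1 :=
  Hom.ext_one_left _ _
    (by show (if a ≤ j then (0 : Fin 2) else 1) = 1; rw [if_neg (not_le.mpr h)])
    (by show (if b ≤ j then (0 : Fin 2) else 1) = 1;
        rw [if_neg (not_le.mpr (lt_of_lt_of_le h hab))])

lemma to_one_cases {n : ℕ} (g : (⦋n⦌ : SimplexCategory) ⟶ ⦋1⦌) :
    (∃ b : Fin 2, g = const ⦋n⦌ ⦋1⦌ b) ∨ ∃ j : Fin (n + 1), g = jmp j := by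
  by_cases h0 : g.toOrderHom (Fin.last n) = 0
  · left
    refine ⟨0, hom_ext' _ _ fun t => ?_⟩
    have : g.toOrderHom t ≤ 0 := h0 ▸ g.toOrderHom.monotone (Fin.le_last t)
    exact le_antisymm this (Fin.zero_le _)
  · by_cases h1 : g.toOrderHom 0 = 0
    · right
      classical
      set S := Finset.univ.filter (fun t : Fin (n + 1) => g.toOrderHom t = 0) with hS
      have hne : S.Nonempty := ⟨0, by simp only [hS, Finset.mem_filter, Finset.mem_univ, true_and]; exact h1⟩
      refine ⟨S.max' hne, hom_ext' _ _ fun t => ?_⟩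
      rw [jmp_app]
      by_cases ht : t ≤ S.max' hne
      · rw [if_pos ht]
        have hm : g.toOrderHom (S.max' hne) = 0 := by
          have := S.max'_mem hne
          simp [hS] at this
          exact this
        exact le_antisymm (hm ▸ g.toOrderHom.monotone ht) (Fin.zero_le _)
      · rw [if_neg ht]
        exact fin2_eq_one fun hz => ht (S.le_max' t (by simp only [hS, Finset.mem_filter, Finset.mem_univ, true_and]; exact hz))
    · left
      refine ⟨1, hom_ext' _ _ fun t => ?_⟩
      have h1' : g.toOrderHom 0 = 1 := fin2_eq_one h1
      have : (1 : Fin 2) ≤ g.toOrderHom t := h1' ▸ g.toOrderHom.monotone (Fin.zero_le t)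
      exact le_antisymm (Fin.le_last _) this

lemma vert_from_edge {n : ℕ} (x : X _⦋n⦌) (a : Fin (n + 1)) :
    ac x (pt a) = ac (ac x (mkOfLe a a le_rfl)) (pt 0) := by
  rw [ac_ac, const_comp]
  rfl

lemma nf0 (hsk0 : ∀ k : ℕ, 0 < k → ∀ x : X _⦋k⦌, IsDegen X x) :
    ∀ n : ℕ, 1 ≤ n → ∀ x : X _⦋n⦌, ∃ v : X _⦋0⦌, x = ac v (tz n) := by
  intro n
  induction n using Nat.strong_induction_on with
  | _ n ih =>
    intro hn x
    obtain ⟨m, hm, ε, hεs, y, hxy⟩ := hsk0 n hn x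
    have hx : x = ac y ε := hxy
    rcases Nat.eq_zero_or_pos m with hm0 | hm1
    · subst hm0
      exact ⟨y, by rw [hx, eq_const_to_zero ε]⟩
    · obtain ⟨v, hv⟩ := ih m hm hm1 y
      exact ⟨v, by rw [hx, hv, ac_ac, comp_tz]⟩

lemma cst_jmp {n : ℕ} (v : X _⦋0⦌) :
    ac v (tz n) = ac (ac v (tz 1)) (jmp (0 : Fin (n + 1))) := by
  rw [ac_ac, comp_tz]

lemma nf (hsk : ∀ k : ℕ, 1 < k → ∀ x : X _⦋k⦌, IsDegen X x) :
    ∀ n : ℕ, 2 ≤ n → ∀ x : X _⦋n⦌, ∃ (z : X _⦋1⦌) (j : Fin (n + 1)), x = ac z (jmp j) := by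
  intro n
  induction n using Nat.strong_induction_on with
  | _ n ih =>
    intro hn x
    obtain ⟨m, hm, ε, hεs, y, hxy⟩ := hsk n hn x
    have hx : x = ac y ε := hxy
    match m, hm, ε, y with
    | 0, hm, ε, y =>
      exact ⟨ac y (tz 1), 0, by rw [hx, eq_const_to_zero ε, cst_jmp]⟩
    | 1, hm, ε, y =>
      rcases to_one_cases ε with ⟨b, hb⟩ | ⟨j, hj⟩
      · exact ⟨ac (ac y (pt b)) (tz 1), 0, by rw [hx, hb, ac_const, cst_jmp]⟩
      · exact ⟨y, j, by rw [hx, hj]⟩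
    | (m' + 2), hm, ε, y =>
      obtain ⟨z, j', hy⟩ := ih (m' + 2) hm (by omega) y
      rcases to_one_cases (ε ≫ jmp j') with ⟨b, hb⟩ | ⟨j, hj⟩
      · exact ⟨ac (ac z (pt b)) (tz 1), 0, by
          rw [hx, hy, ac_ac, hb, ac_const, cst_jmp]⟩
      · exact ⟨z, j, by rw [hx, hy, ac_ac, hj]⟩

lemma jmp_det_aux (n : ℕ) (z z' : X _⦋1⦌) (j j' : Fin (n + 1)) (hjj : j ≤ j')
    (he : ∀ (a b : Fin (n + 1)) (h : a ≤ b),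
      ac (ac z (jmp j)) (mkOfLe a b h) = ac (ac z' (jmp j')) (mkOfLe a b h)) :
    ac z (jmp j) = ac z' (jmp j') := by
  by_cases hjn : j.val < n
  · obtain ⟨b1, hb1⟩ : ∃ b1 : Fin (n + 1), b1.val = j.val + 1 := ⟨⟨j.val + 1, by omega⟩, rfl⟩
    have hjb : j ≤ b1 := Fin.le_def.mpr (by omega)
    have hid : mkOfLe j b1 hjb ≫ jmp j = 𝟙 (⦋1⦌ : SimplexCategory) :=
      mkOfLe_jmp_cross hjb j le_rfl (Fin.lt_def.mpr (by omega))
    have hz : z = ac (ac z' (jmp j')) (mkOfLe j b1 hjb) := by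
      have h1 := he j b1 hjb
      rw [ac_ac, hid, ac_id] at h1
      exact h1
    rcases eq_or_lt_of_le hjj with heq | hlt
    · subst heq
      rw [ac_ac, hid, ac_id] at hz
      rw [hz]
    · have hb1j' : b1 ≤ j' := Fin.le_def.mpr (by have := Fin.lt_def.mp hlt; omega)
      rw [ac_ac, mkOfLe_jmp_low hjb j' hb1j', ac_const] at hz
      have hxz : ac z (jmp j) = ac (ac z' (pt 0)) (tz n) := by
        rw [hz, ac_ac, comp_tz]
      rw [hxz]
      by_cases hj'n : j'.val < n
      · obtain ⟨b2, hb2⟩ : ∃ b2 : Fin (n + 1), b2.val = j'.val + 1 := ⟨⟨j'.val + 1, by omega⟩, rfl⟩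
        have hj'b : j' ≤ b2 := Fin.le_def.mpr (by omega)
        have h2 := he j' b2 hj'b
        rw [ac_ac, ac_ac, mkOfLe_jmp_cross hj'b j' le_rfl (Fin.lt_def.mpr (by omega)), ac_id,
          mkOfLe_jmp_high hj'b j hlt, ac_const] at h2
        have hz1 : ac z (pt 1) = ac z' (pt 0) := by
          rw [hz, ac_ac, pt_tz, ac_id]
        conv_rhs => rw [← h2, hz1, ac_ac, comp_tz]
      · have hj'l : j' = Fin.last n := Fin.ext (by have := j'.isLt; simp [Fin.val_last]; omega)
        conv_rhs => rw [hj'l, jmp_last, ac_const]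
  · have hjl : j = Fin.last n := Fin.ext (by have := j.isLt; simp [Fin.val_last]; omega)
    have hj'l : j' = Fin.last n := Fin.ext (by
      have h1 := Fin.le_def.mp hjj
      have := j'.isLt
      simp only [hjl, Fin.val_last] at h1
      simp only [Fin.val_last]
      omega)
    have e1 : ∀ (u : X _⦋1⦌) (jj : Fin (n + 1)),
        ac (ac (ac u (jmp jj)) (mkOfLe (0 : Fin (n + 1)) 0 le_rfl)) (pt 0) = ac u (pt 0) := by
      intro u jj
      rw [ac_ac, ac_ac]
      congr 1
    have hvv : ac z (pt 0) = ac z' (pt 0) := by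
      have h2 := congrArg (fun u : X _⦋1⦌ => ac u (pt (0 : Fin 2))) (he 0 0 le_rfl)
      rw [e1, e1] at h2
      exact h2
    rw [hjl, hj'l, jmp_last]
    conv_lhs => rw [ac_const]
    conv_rhs => rw [ac_const]
    rw [hvv]

lemma edge_det (hsk : ∀ k : ℕ, 1 < k → ∀ x : X _⦋k⦌, IsDegen X x)
    (n : ℕ) (hn : 2 ≤ n) (x x' : X _⦋n⦌)
    (he : ∀ (a b : Fin (n + 1)) (h : a ≤ b), ac x (mkOfLe a b h) = ac x' (mkOfLe a b h)) :
    x = x' := by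
  obtain ⟨z, j, hx⟩ := nf hsk n hn x
  obtain ⟨z', j', hx'⟩ := nf hsk n hn x'
  rcases le_total j j' with h | h
  · rw [hx, hx']
    exact jmp_det_aux n z z' j j' h fun a b hab => by
      rw [← hx, ← hx']; exact he a b hab
  · rw [hx, hx']
    exact (jmp_det_aux n z' z j' j h fun a b hab => by
      rw [← hx, ← hx']; exact (he a b hab).symm).symm

section Sphere

variable {K : ℕ} {c : Fin (K + 3) → X _⦋K + 1⦌}

lemma sphere_compat (hc : IsSphere X c) {m : ℕ} {i i' : Fin (K + 3)} (hii : i < i')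
    {e e' : (⦋m⦌ : SimplexCategory) ⟶ ⦋K + 1⦌}
    (h : e ≫ δ i = e' ≫ δ i') : ac (c i) e = ac (c i') e' := by
  have hvv : i.val < i'.val := Fin.lt_def.mp hii
  have hi'3 : i'.val < K + 3 := i'.isLt
  obtain ⟨j, hjv⟩ : ∃ j : Fin (K + 2), j.val = i'.val - 1 := ⟨⟨i'.val - 1, by omega⟩, rfl⟩
  obtain ⟨i0, hi0v⟩ : ∃ i0 : Fin (K + 2), i0.val = i.val := ⟨⟨i.val, by omega⟩, rfl⟩
  have hji' : j.succ = i' := Fin.ext (by simp [Fin.val_succ]; omega)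
  have hi0i : i0.castSucc = i := Fin.ext (by simp [Fin.coe_castSucc]; omega)
  have hi0j : i0 ≤ j := Fin.le_def.mpr (by omega)
  have hmiss : ∀ t, e'.toOrderHom t ≠ i0 := by
    intro t ht
    have happ := congrArg (fun q : (⦋m⦌ : SimplexCategory) ⟶ ⦋K + 2⦌ =>
      q.toOrderHom t) h
    dsimp only at happ
    have hL : (e ≫ δ i).toOrderHom t = Fin.succAbove i (e.toOrderHom t) := rfl
    have hR : (e' ≫ δ i').toOrderHom t = Fin.succAbove i' (e'.toOrderHom t) := rfl
    rw [hL, hR, ht] at happ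
    have : Fin.succAbove i' i0 = i := by
      rw [Fin.succAbove_of_castSucc_lt _ _ (by rw [hi0i]; exact hii)]
      exact hi0i
    rw [this] at happ
    exact Fin.succAbove_ne i (e.toOrderHom t) happ
  have hg := factor_δ_spec e' i0 hmiss
  set g := factor_δ e' i0 with hgdef
  have key : e ≫ δ i = (g ≫ δ j) ≫ δ i := by
    rw [h, ← hg, Category.assoc, Category.assoc]
    rw [← hji', δ_comp_δ hi0j, hi0i]
  have he2 : e = g ≫ δ j := (cancel_mono (δ i)).mp key
  have hrel := hc i0 j hi0j
  rw [hji', hi0i] at hrel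
  rw [he2, ← hg, ← ac_ac, ← ac_ac]
  have hrel' : ac (c i') (δ i0) = ac (c i) (δ j) := hrel
  rw [hrel']

open Classical in
noncomputable def Ef (c : Fin (K + 3) → X _⦋K + 1⦌) {m : ℕ}
    (f : (⦋m⦌ : SimplexCategory) ⟶ ⦋K + 2⦌) : X _⦋m⦌ :=
  if h : ∃ p : Fin (K + 3) × ((⦋m⦌ : SimplexCategory) ⟶ ⦋K + 1⦌), p.2 ≫ δ p.1 = f then
    ac (c h.choose.1) h.choose.2
  else ac (c 0) (const ⦋m⦌ ⦋K + 1⦌ 0)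

lemma E_eq (hc : IsSphere X c) {m : ℕ} {i : Fin (K + 3)}
    {e : (⦋m⦌ : SimplexCategory) ⟶ ⦋K + 1⦌} {f : (⦋m⦌ : SimplexCategory) ⟶ ⦋K + 2⦌}
    (he : e ≫ δ i = f) : Ef c f = ac (c i) e := by
  have hex : ∃ p : Fin (K + 3) × ((⦋m⦌ : SimplexCategory) ⟶ ⦋K + 1⦌), p.2 ≫ δ p.1 = f :=
    ⟨⟨i, e⟩, he⟩
  rw [Ef, dif_pos hex]
  have hp : hex.choose.2 ≫ δ hex.choose.1 = f := hex.choose_spec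
  rcases lt_trichotomy hex.choose.1 i with hlt | heq | hgt
  · exact sphere_compat hc hlt (hp.trans he.symm)
  · have he2 : hex.choose.2 = e := by
      apply (cancel_mono (δ i)).mp
      rw [he, ← heq]
      exact hp
    rw [heq, he2]
  · exact (sphere_compat hc hgt (he.trans hp.symm)).symm

lemma E_fact {m : ℕ} (f : (⦋m⦌ : SimplexCategory) ⟶ ⦋K + 2⦌) (hm : m + 1 < K + 3) :
    ∃ (i : Fin (K + 3)) (e : (⦋m⦌ : SimplexCategory) ⟶ ⦋K + 1⦌), e ≫ δ i = f := by
  have hns : ¬ Function.Surjective f.toOrderHom := by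
    intro hs
    have hcard := Fintype.card_le_of_surjective _ hs
    simp only [len_mk, Fintype.card_fin] at hcard
    omega
  rw [Function.Surjective] at hns
  push_neg at hns
  obtain ⟨i, hi⟩ := hns
  exact ⟨i, factor_δ f i, factor_δ_spec f i (fun t => hi t)⟩

lemma E_nat (hc : IsSphere X c) {m p : ℕ} (f : (⦋m⦌ : SimplexCategory) ⟶ ⦋K + 2⦌)
    (hm : m + 1 < K + 3) (g : (⦋p⦌ : SimplexCategory) ⟶ ⦋m⦌) :
    Ef c (g ≫ f) = ac (Ef c f) g := by
  obtain ⟨i, e, he⟩ := E_fact f hm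
  rw [E_eq hc he, ac_ac]
  exact E_eq hc (show (g ≫ e) ≫ δ i = g ≫ f by rw [Category.assoc, he])

def edge (a b : Fin (K + 3)) : (⦋1⦌ : SimplexCategory) ⟶ ⦋K + 2⦌ :=
  if h : a ≤ b then mkOfLe a b h else mkOfLe b a (le_of_not_ge h)

lemma edge_of_le {a b : Fin (K + 3)} (h : a ≤ b) : edge a b = mkOfLe a b h := dif_pos h

noncomputable def Ed (c : Fin (K + 3) → X _⦋K + 1⦌) (a b : Fin (K + 3)) : X _⦋1⦌ :=
  Ef c (edge a b)

noncomputable def Vt (c : Fin (K + 3) → X _⦋K + 1⦌) (a : Fin (K + 3)) : X _⦋0⦌ :=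
  Ef c (pt a)

lemma Ed_def (a b : Fin (K + 3)) : Ed c a b = Ef c (edge a b) := rfl

def Cst (e : X _⦋1⦌) : Prop := ∃ v : X _⦋0⦌, e = ac v (tz 1)

lemma ed_pt0 (hc : IsSphere X c) {a b : Fin (K + 3)} (hab : a ≤ b) :
    ac (Ed c a b) (pt 0) = Vt c a := by
  rw [Ed_def, edge_of_le hab, ← E_nat hc _ (by omega) (pt (0 : Fin 2)),
    show (pt (0 : Fin 2)) ≫ mkOfLe a b hab = pt a from const_comp _ _ _]
  rfl

lemma ed_pt1 (hc : IsSphere X c) {a b : Fin (K + 3)} (hab : a ≤ b) :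
    ac (Ed c a b) (pt 1) = Vt c b := by
  rw [Ed_def, edge_of_le hab, ← E_nat hc _ (by omega) (pt (1 : Fin 2)),
    show (pt (1 : Fin 2)) ≫ mkOfLe a b hab = pt b from const_comp _ _ _]
  rfl

lemma ed_diag (hc : IsSphere X c) (a : Fin (K + 3)) :
    Ed c a a = ac (Vt c a) (tz 1) := by
  rw [Ed_def, edge_of_le (le_refl a)]
  have h1 : mkOfLe a a (le_refl a) = const ⦋1⦌ ⦋K + 2⦌ a := Hom.ext_one_left _ _ rfl rfl
  rw [h1, const_fac_thru_zero]
  exact E_nat hc (pt a) (by omega) (tz 1)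

lemma cst_ed (hc : IsSphere X c) {a b : Fin (K + 3)} (hab : a ≤ b) (h : Cst (Ed c a b)) :
    Ed c a b = ac (Vt c a) (tz 1) ∧ Vt c a = Vt c b := by
  obtain ⟨v, hv⟩ := h
  have h0 : Vt c a = v := by rw [← ed_pt0 hc hab, hv, ac_ac, pt_tz, ac_id]
  have h1 : Vt c b = v := by rw [← ed_pt1 hc hab, hv, ac_ac, pt_tz, ac_id]
  exact ⟨by rw [hv, h0], h0.trans h1.symm⟩

lemma trip (hsk : ∀ k : ℕ, 1 < k → ∀ x : X _⦋k⦌, IsDegen X x)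
    (hc : IsSphere X c) (hK : 1 ≤ K) {a b d : Fin (K + 3)} (hab : a ≤ b) (hbd : b ≤ d) :
    (Cst (Ed c a b) ∧ Ed c a d = Ed c b d) ∨ (Cst (Ed c b d) ∧ Ed c a d = Ed c a b) := by
  have h3 : (2 : ℕ) + 1 < K + 3 := by omega
  set tri := mkOfLeComp a b d hab hbd with htri
  have he01 : Ed c a b = ac (Ef c tri) (mkOfLe 0 1 (by decide)) := by
    rw [Ed_def, edge_of_le hab, ← E_nat hc tri h3]
    congr 1
    exact Hom.ext_one_left _ _ rfl rfl
  have he02 : Ed c a d = ac (Ef c tri) (mkOfLe 0 2 (by decide)) := by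
    rw [Ed_def, edge_of_le (hab.trans hbd), ← E_nat hc tri h3]
    congr 1
    exact Hom.ext_one_left _ _ rfl rfl
  have he12 : Ed c b d = ac (Ef c tri) (mkOfLe 1 2 (by decide)) := by
    rw [Ed_def, edge_of_le hbd, ← E_nat hc tri h3]
    congr 1
    exact Hom.ext_one_left _ _ rfl rfl
  obtain ⟨z, jj, hTz⟩ := nf hsk 2 le_rfl (Ef c tri)
  rw [hTz, ac_ac] at he01 he02 he12
  fin_cases jj
  ·
    rw [mkOfLe_jmp_cross _ _ (by decide) (by decide), ac_id] at he01
    rw [mkOfLe_jmp_cross _ _ (by decide) (by decide), ac_id] at he02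
    rw [mkOfLe_jmp_high _ _ (by decide), ac_const] at he12
    exact Or.inr ⟨⟨ac z (pt 1), he12⟩, he02.trans he01.symm⟩
  ·
    rw [mkOfLe_jmp_low _ _ (by decide), ac_const] at he01
    rw [mkOfLe_jmp_cross _ _ (by decide) (by decide), ac_id] at he02
    rw [mkOfLe_jmp_cross _ _ (by decide) (by decide), ac_id] at he12
    exact Or.inl ⟨⟨ac z (pt 0), he01⟩, he02.trans he12.symm⟩
  ·
    rw [mkOfLe_jmp_low _ _ (by decide), ac_const] at he01
    rw [mkOfLe_jmp_low _ _ (by decide), ac_const] at he02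
    rw [mkOfLe_jmp_low _ _ (by decide), ac_const] at he12
    exact Or.inl ⟨⟨ac z (pt 0), he01⟩, he02.trans he12.symm⟩

lemma realize (hsk : ∀ k : ℕ, 1 < k → ∀ x : X _⦋k⦌, IsDegen X x)
    (hc : IsSphere X c) (hK : 1 ≤ K) :
    ∃ y : X _⦋K + 2⦌, ∀ (a b : Fin (K + 3)) (h : a ≤ b),
      ac y (mkOfLe a b h) = Ed c a b := by
  by_cases hD : ∀ a b : Fin (K + 3), a.val + 1 = b.val → Cst (Ed c a b)
  · -- all consecutive edges are constant: the filler is totally constant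
    have hV : ∀ a : Fin (K + 3), Vt c a = Vt c 0 := by
      have aux : ∀ t : ℕ, ∀ ht : t < K + 3, Vt c ⟨t, ht⟩ = Vt c 0 := by
        intro t
        induction t with
        | zero =>
          intro ht
          have h0 : (⟨0, ht⟩ : Fin (K + 3)) = 0 := by
            apply Fin.ext; simp
          rw [h0]
        | succ s ihs =>
          intro ht
          have hs : s < K + 3 := by omega
          have hab : (⟨s, hs⟩ : Fin (K + 3)) ≤ ⟨s + 1, ht⟩ := Fin.mk_le_mk.mpr (by omega)
          have hcst := hD ⟨s, hs⟩ ⟨s + 1, ht⟩ rfl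
          have := (cst_ed hc hab hcst).2
          rw [← this]
          exact ihs hs
      intro a
      have := aux a.val a.isLt
      rwa [Fin.eta] at this
    have hC : ∀ (a b : Fin (K + 3)), a ≤ b → Cst (Ed c a b) := by
      suffices aux : ∀ d (a b : Fin (K + 3)) (h : a ≤ b), b.val - a.val = d → Cst (Ed c a b) by
        exact fun a b h => aux _ a b h rfl
      intro d
      induction d using Nat.strong_induction_on with
      | _ d ihd =>
        intro a b hab hd
        have habv := Fin.le_def.mp hab
        rcases Nat.eq_zero_or_pos d with h0 | h1
        · have : a = b := Fin.ext (by omega)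
          subst this
          exact ⟨Vt c a, ed_diag hc a⟩
        · by_cases hd1 : d = 1
          · exact hD a b (by omega)
          · obtain ⟨mid, hmv⟩ : ∃ m : Fin (K + 3), m.val = a.val + 1 :=
              ⟨⟨a.val + 1, by have := b.isLt; omega⟩, rfl⟩
            have ham : a ≤ mid := Fin.le_def.mpr (by omega)
            have hmb : mid ≤ b := Fin.le_def.mpr (by omega)
            rcases trip hsk hc hK ham hmb with ⟨h1', h2'⟩ | ⟨h1', h2'⟩
            · rw [h2']
              exact ihd (b.val - mid.val) (by omega) mid b hmb rfl
            · rw [h2']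
              exact hD a mid (by omega)
    refine ⟨ac (Vt c 0) (tz (K + 2)), ?_⟩
    intro a b h
    rw [ac_ac, comp_tz, (cst_ed hc h (hC a b h)).1, hV a]
  · -- there is a nonconstant consecutive edge: the filler is a jump
    push_neg at hD
    obtain ⟨A, B, hAB1, hw⟩ := hD
    have hAB : A ≤ B := Fin.le_def.mpr (by omega)
    set w := Ed c A B with hwdef
    have hAq : ∀ q, B ≤ q → Ed c A q = w := by
      intro q hq
      rcases eq_or_lt_of_le hq with heq | hlt
      · rw [← heq]
      · rcases trip hsk hc hK hAB hq with ⟨h1', _⟩ | ⟨_, h2'⟩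
        · exact absurd h1' hw
        · exact h2'
    have hcross : ∀ p q, p ≤ A → B ≤ q → Ed c p q = w := by
      intro p q hpA hBq
      rcases eq_or_lt_of_le hpA with heq | hlt
      · rw [heq]; exact hAq q hBq
      · have hAq' := hAq q hBq
        have haq : A ≤ q := hAB.trans hBq
        rcases trip hsk hc hK hlt.le haq with ⟨_, h2'⟩ | ⟨h1', _⟩
        · rw [h2', hAq']
        · rw [hAq'] at h1'
          exact absurd h1' hw
    have hlow : ∀ p q, p ≤ q → q ≤ A → Cst (Ed c p q) := by
      intro p q hpq hqA
      rcases eq_or_lt_of_le hpq with heq | hlt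
      · rw [← heq]; exact ⟨Vt c p, ed_diag hc p⟩
      · have hqB : q ≤ B := hqA.trans hAB
        rcases trip hsk hc hK hlt.le hqB with ⟨h1', _⟩ | ⟨h1', _⟩
        · exact h1'
        · rw [hcross q B hqA le_rfl] at h1'
          exact absurd h1' hw
    have hhigh : ∀ p q, p ≤ q → B ≤ p → Cst (Ed c p q) := by
      intro p q hpq hBp
      rcases eq_or_lt_of_le hpq with heq | hlt
      · rw [← heq]; exact ⟨Vt c p, ed_diag hc p⟩
      · have hAp : A ≤ p := hAB.trans hBp
        rcases trip hsk hc hK hAp hpq with ⟨h1', _⟩ | ⟨h1', _⟩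
        · rw [hcross A p le_rfl hBp] at h1'
          exact absurd h1' hw
        · exact h1'
    have hVlow : ∀ p, p ≤ A → Vt c p = Vt c A :=
      fun p hp => (cst_ed hc hp (hlow p A hp le_rfl)).2
    have hVhigh : ∀ q, B ≤ q → Vt c q = Vt c B :=
      fun q hq => ((cst_ed hc hq (hhigh B q hq le_rfl)).2).symm
    have hVA : Vt c A = ac w (pt 0) := (ed_pt0 hc hAB).symm
    have hVB : Vt c B = ac w (pt 1) := (ed_pt1 hc hAB).symm
    refine ⟨ac w (jmp A), ?_⟩
    intro a b h
    rw [ac_ac]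
    rcases le_or_gt b A with hbA | hAb
    · rw [mkOfLe_jmp_low h A hbA, ac_const, ← hVA, ← hVlow a (h.trans hbA)]
      exact ((cst_ed hc h (hlow a b h hbA)).1).symm
    · rcases le_or_gt a A with haA | hAa
      · have hBb : B ≤ b := Fin.le_def.mpr (by have := Fin.lt_def.mp hAb; omega)
        rw [mkOfLe_jmp_cross h A haA hAb, ac_id]
        exact (hcross a b haA hBb).symm
      · have hBa : B ≤ a := Fin.le_def.mpr (by have := Fin.lt_def.mp hAa; omega)
        rw [mkOfLe_jmp_high h A hAa, ac_const, ← hVB, ← hVhigh a hBa]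
        exact ((cst_ed hc h (hhigh a b h hBa)).1).symm

end Sphere

/-- Every 0-skeletal simplicial set is 1-coskeletal, and every 1-skeletal simplicial
set is 2-coskeletal. (Spheres of dimension `k = K + 2`; `k > 1` holds for all `K`,
and `k > 2` means `K ≥ 1`.) -/
theorem low_skeletal_coskeletal :
    (∀ X : SSet, (∀ k : ℕ, 0 < k → ∀ x : X _⦋k⦌, IsDegen X x) →
      ∀ (K : ℕ) (c : Fin (K + 3) → X _⦋K + 1⦌), IsSphere X c →
        ∃! y : X _⦋K + 2⦌, IsFiller X y c) ∧
    (∀ X : SSet, (∀ k : ℕ, 1 < k → ∀ x : X _⦋k⦌, IsDegen X x) →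
      ∀ K : ℕ, 1 ≤ K → ∀ c : Fin (K + 3) → X _⦋K + 1⦌, IsSphere X c →
        ∃! y : X _⦋K + 2⦌, IsFiller X y c) := by
  constructor
  · -- 0-skeletal implies 1-coskeletal
    intro X hsk0 K c hc
    have hcst : ∀ i : Fin (K + 3), ∃ u : X _⦋0⦌, c i = ac u (tz (K + 1)) :=
      fun i => nf0 hsk0 (K + 1) (by omega) (c i)
    have hvert : ∀ i : Fin (K + 3), ac (c i) (pt 0) = ac (c 0) (pt 0) := by
      have key : ∀ j : Fin (K + 2), ac (c j.succ) (pt 0) = ac (c 0) (pt 0) := by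
        intro j
        have hr := hc 0 j (Fin.zero_le j)
        have hr' : ac (c j.succ) (δ (0 : Fin (K + 2))) = ac (c 0) (δ j) := by
          have h0 : ((0 : Fin (K + 2)).castSucc : Fin (K + 3)) = 0 := Fin.castSucc_zero
          rw [← h0]
          exact hr
        have h1 := congrArg (fun u : X _⦋K⦌ => ac u (pt 0)) hr'
        rw [ac_ac, ac_ac, const_comp, const_comp] at h1
        obtain ⟨u1, hu1⟩ := hcst j.succ
        obtain ⟨u0, hu0⟩ := hcst 0
        rw [const_vert hu1, const_vert hu0] at h1
        rw [const_vert hu1, const_vert hu0]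
        exact h1
      intro i
      rcases Fin.eq_zero_or_eq_succ i with h0 | ⟨j, hj⟩
      · rw [h0]
      · rw [hj]; exact key j
    have hfactpt : (pt (0 : Fin (K + 3)) : (⦋0⦌ : SimplexCategory) ⟶ ⦋K + 2⦌) =
        pt (0 : Fin (K + 2)) ≫ δ (1 : Fin (K + 3)) := by
      rw [const_comp]
      congr 1
    have huniq : ∀ y' : X _⦋K + 2⦌, IsFiller X y' c →
        y' = ac (ac (c 0) (pt 0)) (tz (K + 2)) := by
      intro y' hy'
      obtain ⟨u, hu⟩ := nf0 hsk0 (K + 2) (by omega) y'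
      have h1 : ac y' (pt 0) = u := const_vert hu 0
      have h2 : ac y' (pt 0) = ac (c 0) (pt 0) := by
        rw [hfactpt, ← ac_ac]
        rw [show ac y' (δ (1 : Fin (K + 3))) = c 1 from hy' 1]
        exact hvert 1
      rw [hu, ← h1, h2]
    refine ⟨ac (ac (c 0) (pt 0)) (tz (K + 2)), ?_, huniq⟩
    intro i
    show ac (ac (ac (c 0) (pt 0)) (tz (K + 2))) (δ i) = c i
    rw [ac_ac, comp_tz]
    obtain ⟨u, hu⟩ := hcst i
    have : ac (c 0) (pt 0) = u := by
      rw [← hvert i]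
      exact const_vert hu 0
    rw [this, ← hu]
  · -- 1-skeletal implies 2-coskeletal
    intro X hsk K hK c hc
    obtain ⟨y, hy⟩ := realize hsk hc hK
    have hyE : ∀ g : (⦋1⦌ : SimplexCategory) ⟶ ⦋K + 2⦌, ac y g = Ef c g := by
      intro g
      obtain ⟨a, b, h, hg⟩ := one_eq_mkOfLe g
      rw [hg, hy a b h, Ed_def, edge_of_le h]
    have hfill : IsFiller X y c := by
      intro i
      refine edge_det hsk (K + 1) (by omega) _ _ fun a b h => ?_
      have hL : X.map (δ i).op y = ac y (δ i) := rfl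
      rw [hL, ac_ac, hyE _]
      exact E_eq hc rfl
    have hfe : ∀ (yy : X _⦋K + 2⦌), IsFiller X yy c →
        ∀ (a b : Fin (K + 3)) (h : a ≤ b),
          ac yy (mkOfLe a b h) = Ef c (mkOfLe a b h) := by
      intro yy hyy a b h
      obtain ⟨i, e, he⟩ := E_fact (mkOfLe a b h) (by omega)
      rw [← he, ← ac_ac, show ac yy (δ i) = c i from hyy i]
      exact (E_eq hc (rfl : e ≫ δ i = e ≫ δ i)).symm
    refine ⟨y, hfill, ?_⟩
    intro y' hy'
    refine edge_det hsk (K + 2) (by omega) _ _ fun a b h => ?_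
    rw [hfe y' hy' a b h, hfe y hfill a b h]


end AufhebungSSet
end
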